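/- arXiv:2210.05537 — 4 statements merged into one kernel-verified Lean document; each statement's English description precedes it below -/
import Mathlib

section
/- Let σ_n be a uniform random 231-avoiding permutation of size n, decomposed uniquely as σ_n = τ_n ⊕ (1 ⊖ π_n) with τ_n, π_n ∈ Av(231). Then for every fixed 231-avoiding permutation ρ, lim_{n→∞} P(τ_n = ρ) = lim_{n→∞} P(π_n = ρ) = 4^{-|ρ|-1}, where |ρ| is the size of ρ. -/
open FirstOrder Filter Asymptotics Topology

namespace Av231

/-- Relation symbols of the theory of two orders: two binary relations `<_P` and `<_V`. -/
inductive TwoRel : ℕ → Type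
  | lp : TwoRel 2
  | lv : TwoRel 2

/-- The first-order language with two binary relation symbols `<_P` and `<_V`. -/
def L : Language := ⟨fun _ => Empty, TwoRel⟩

/-- The `L`-structure on `Fin n` associated with a permutation `σ` of `{1,…,n}`:
`i <_P j` iff `i < j` and `i <_V j` iff `σ i < σ j`. -/
def pStruct {n : ℕ} (σ : Equiv.Perm (Fin n)) : L.Structure (Fin n) where
  funMap := fun f _ => nomatch f
  RelMap := fun r x =>
    match r with
    | .lp => x 0 < x 1
    | .lv => σ (x 0) < σ (x 1)

/-- A permutation satisfies a first-order sentence. -/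
def Sat {n : ℕ} (σ : Equiv.Perm (Fin n)) (ψ : L.Sentence) : Prop :=
  @Language.Sentence.Realize L (Fin n) (pStruct σ) ψ

/-- The quantifier depth of a first-order formula. -/
def qd {L' : Language} {α : Type*} : ∀ {n : ℕ}, L'.BoundedFormula α n → ℕ
  | _, .falsum => 0
  | _, .equal _ _ => 0
  | _, .rel _ _ => 0
  | _, .imp f g => max (qd f) (qd g)
  | _, .all f => qd f + 1

/-- A permutation avoids the pattern `231`. -/
def Avoids {n : ℕ} (σ : Equiv.Perm (Fin n)) : Prop :=
  ¬ ∃ i j k : Fin n, i < j ∧ j < k ∧ σ k < σ i ∧ σ i < σ j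

/-- The number of `231`-avoiding permutations of size `n` satisfying `ψ`. -/
noncomputable def avN (n : ℕ) (ψ : L.Sentence) : ℕ :=
  Nat.card {σ : Equiv.Perm (Fin n) // Avoids σ ∧ Sat σ ψ}

/-- The probability that a uniform random `231`-avoiding permutation of size `n`
satisfies `ψ` (the number of `231`-avoiding permutations of size `n` is `catalan n`). -/
noncomputable def prob (n : ℕ) (ψ : L.Sentence) : ℝ :=
  (avN n ψ : ℝ) / (catalan n : ℝ)

/-- Permutations of arbitrary finite size. -/
abbrev FinPerm := Σ n : ℕ, Equiv.Perm (Fin n)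

def AvoidsF (p : FinPerm) : Prop := Avoids p.2

/-- Direct sum of permutations. -/
def dsum {a b : ℕ} (σ : Equiv.Perm (Fin a)) (τ : Equiv.Perm (Fin b)) :
    Equiv.Perm (Fin (a + b)) :=
  finSumFinEquiv.permCongr (Equiv.sumCongr σ τ)

/-- Skew sum of permutations. -/
def ssum {a b : ℕ} (σ : Equiv.Perm (Fin a)) (τ : Equiv.Perm (Fin b)) :
    Equiv.Perm (Fin (a + b)) :=
  finSumFinEquiv.symm.trans ((Equiv.sumCongr σ τ).trans
    ((Equiv.sumComm (Fin a) (Fin b)).trans (finSumFinEquiv.trans (finCongr (Nat.add_comm b a)))))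

/-- The operation `(τ, π) ↦ τ ⊕ (1 ⊖ π)` on permutations of arbitrary sizes. -/
def glue (τ π : FinPerm) : FinPerm :=
  ⟨τ.1 + (1 + π.1), dsum τ.2 (ssum (1 : Equiv.Perm (Fin 1)) π.2)⟩

/-- Two permutations are `k`-equivalent when they satisfy the same first-order sentences
of quantifier depth at most `k`. -/
def kEquiv (k : ℕ) (p q : FinPerm) : Prop :=
  ∀ ψ : L.Sentence, qd ψ ≤ k → (Sat p.2 ψ ↔ Sat q.2 ψ)


variable {a b : ℕ} (τ : Equiv.Perm (Fin a)) (π : Equiv.Perm (Fin b))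

def G : Equiv.Perm (Fin (a + (1 + b))) := dsum τ (ssum (1 : Equiv.Perm (Fin 1)) π)

lemma G_left (i : Fin a) : G τ π (Fin.castAdd (1+b) i) = Fin.castAdd (1+b) (τ i) := by
  simp [G, dsum, Equiv.permCongr_apply]

lemma G_mid : (G τ π (Fin.natAdd a (Fin.castAdd b 0)) : ℕ) = a + b := by
  simp [G, dsum, ssum, Equiv.permCongr_apply]

lemma G_right (j : Fin b) : (G τ π (Fin.natAdd a (Fin.natAdd 1 j)) : ℕ) = a + π j := by
  simp [G, dsum, ssum, Equiv.permCongr_apply]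

lemma G_val_lt (i : Fin (a + (1+b))) (x : Fin a) (h : (i:ℕ) = (x:ℕ)) :
    (G τ π i : ℕ) = τ x := by
  have e : Fin.castAdd (1+b) x = i := Fin.ext h.symm
  rw [← e, G_left]; rfl

lemma G_val_eq (i : Fin (a + (1+b))) (h : (i:ℕ) = a) : (G τ π i : ℕ) = a + b := by
  have e : Fin.natAdd a (Fin.castAdd b 0) = i := by ext; simp only [Fin.coe_natAdd, Fin.coe_castAdd, Fin.val_zero]; omega
  rw [← e, G_mid]

lemma G_val_gt (i : Fin (a + (1+b))) (x : Fin b) (h : (i:ℕ) = a + 1 + (x:ℕ)) :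
    (G τ π i : ℕ) = a + π x := by
  have e : Fin.natAdd a (Fin.natAdd 1 x) = i := by ext; simp only [Fin.coe_natAdd]; omega
  rw [← e, G_right]

lemma avoids_G : Avoids (G τ π) ↔ Avoids τ ∧ Avoids π := by
  constructor
  · intro hG
    constructor
    · rintro ⟨i, j, k, hij, hjk, h1, h2⟩
      refine hG ⟨Fin.castAdd (1+b) i, Fin.castAdd (1+b) j, Fin.castAdd (1+b) k, ?_, ?_, ?_, ?_⟩
      · rw [Fin.lt_def]; simp only [Fin.coe_castAdd, Fin.coe_natAdd]; have := Fin.lt_def.mp hij; omega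
      · rw [Fin.lt_def]; simp only [Fin.coe_castAdd, Fin.coe_natAdd]; have := Fin.lt_def.mp hjk; omega
      · rw [Fin.lt_def, G_val_lt τ π _ k rfl, G_val_lt τ π _ i rfl]; exact h1
      · rw [Fin.lt_def, G_val_lt τ π _ i rfl, G_val_lt τ π _ j rfl]; exact h2
    · rintro ⟨i, j, k, hij, hjk, h1, h2⟩
      refine hG ⟨Fin.natAdd a (Fin.natAdd 1 i), Fin.natAdd a (Fin.natAdd 1 j),
        Fin.natAdd a (Fin.natAdd 1 k), ?_, ?_, ?_, ?_⟩
      · rw [Fin.lt_def]; simp only [Fin.coe_castAdd, Fin.coe_natAdd]; have := Fin.lt_def.mp hij; omega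
      · rw [Fin.lt_def]; simp only [Fin.coe_castAdd, Fin.coe_natAdd]; have := Fin.lt_def.mp hjk; omega
      · rw [Fin.lt_def, G_val_gt τ π _ k (by simp only [Fin.coe_natAdd, Fin.val_mk]; omega), G_val_gt τ π _ i (by simp only [Fin.coe_natAdd, Fin.val_mk]; omega)]
        exact Nat.add_lt_add_left (Fin.lt_def.mp h1) a
      · rw [Fin.lt_def, G_val_gt τ π _ i (by simp only [Fin.coe_natAdd, Fin.val_mk]; omega), G_val_gt τ π _ j (by simp only [Fin.coe_natAdd, Fin.val_mk]; omega)]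
        exact Nat.add_lt_add_left (Fin.lt_def.mp h2) a
  · rintro ⟨hτ, hπ⟩ ⟨i, j, k, hij, hjk, h1, h2⟩
    rw [Fin.lt_def] at hij hjk h1 h2
    have hi' := i.isLt; have hj' := j.isLt; have hk' := k.isLt
    rcases lt_trichotomy (i:ℕ) a with hi | hi | hi
    · rcases lt_trichotomy (k:ℕ) a with hk | hk | hk
      · have hj : (j:ℕ) < a := by omega
        have ei := G_val_lt τ π i ⟨i, hi⟩ rfl
        have ej := G_val_lt τ π j ⟨j, hj⟩ rfl
        have ek := G_val_lt τ π k ⟨k, hk⟩ rfl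
        exact hτ ⟨⟨i, hi⟩, ⟨j, hj⟩, ⟨k, hk⟩, by simp only [Fin.mk_lt_mk]; omega,
          by simp only [Fin.mk_lt_mk]; omega, by rw [Fin.lt_def]; omega, by rw [Fin.lt_def]; omega⟩
      · have ei := G_val_lt τ π i ⟨i, hi⟩ rfl
        have ek := G_val_eq τ π k hk
        have := (τ ⟨i, hi⟩).isLt; omega
      · have ei := G_val_lt τ π i ⟨i, hi⟩ rfl
        have ek := G_val_gt τ π k ⟨(k:ℕ)-(a+1), by omega⟩ (by show (k:ℕ) = a+1+((k:ℕ)-(a+1)); omega)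
        have := (τ ⟨i, hi⟩).isLt
        have := (π ⟨(k:ℕ)-(a+1), by omega⟩ : Fin b).isLt
        omega
    · have hj : a < (j:ℕ) := by omega
      have ei := G_val_eq τ π i hi
      have ej := G_val_gt τ π j ⟨(j:ℕ)-(a+1), by omega⟩ (by show (j:ℕ) = a+1+((j:ℕ)-(a+1)); omega)
      have := (π ⟨(j:ℕ)-(a+1), by omega⟩ : Fin b).isLt; omega
    · have hj : a < (j:ℕ) := by omega
      have hk : a < (k:ℕ) := by omega
      have ei := G_val_gt τ π i ⟨(i:ℕ)-(a+1), by omega⟩ (by show (i:ℕ) = a+1+((i:ℕ)-(a+1)); omega)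
      have ej := G_val_gt τ π j ⟨(j:ℕ)-(a+1), by omega⟩ (by show (j:ℕ) = a+1+((j:ℕ)-(a+1)); omega)
      have ek := G_val_gt τ π k ⟨(k:ℕ)-(a+1), by omega⟩ (by show (k:ℕ) = a+1+((k:ℕ)-(a+1)); omega)
      exact hπ ⟨⟨(i:ℕ)-(a+1), by omega⟩, ⟨(j:ℕ)-(a+1), by omega⟩, ⟨(k:ℕ)-(a+1), by omega⟩,
        by simp only [Fin.mk_lt_mk]; omega, by simp only [Fin.mk_lt_mk]; omega,
        by rw [Fin.lt_def]; omega, by rw [Fin.lt_def]; omega⟩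


/-- Key structural fact: in an avoiding permutation, everything left of the
position of the max is smaller than everything right of it. -/
lemma left_lt_right {m : ℕ} (σ : Equiv.Perm (Fin m)) (hσ : Avoids σ)
    (p i k : Fin m) (hmax : ∀ x, (σ x : ℕ) ≤ (σ p : ℕ))
    (hi : i < p) (hk : p < k) : σ i < σ k := by
  rcases lt_or_ge (σ i) (σ k) with h | h
  · exact h
  have hne : σ k ≠ σ i := fun e => absurd (σ.injective e) (by intro e'; subst e'; exact absurd hk (by intro hh; exact absurd (lt_trans hi hh) (lt_irrefl _)))
  have h1 : σ k < σ i := lt_of_le_of_ne h hne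
  have h2 : σ i < σ p := by
    rcases lt_or_ge (σ i) (σ p) with h' | h'
    · exact h'
    · have : σ i = σ p := le_antisymm (hmax i) (by exact_mod_cast h')
      exact absurd (σ.injective this) (Fin.ne_of_lt hi)
  exact absurd ⟨i, p, k, hi, hk, h1, h2⟩ hσ

/-- In an avoiding permutation of `Fin (a+(1+b))` where the max sits at position `a`,
positions left of `a` carry values `< a`. -/
lemma left_small (σ : Equiv.Perm (Fin (a + (1+b)))) (hσ : Avoids σ)
    (hm : (σ ⟨a, by omega⟩ : ℕ) = a + b) :
    (∀ i : Fin (a + (1+b)), (i:ℕ) < a → (σ i : ℕ) < a) ∧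
    (∀ k : Fin (a + (1+b)), a < (k:ℕ) → a ≤ (σ k : ℕ) ∧ (σ k : ℕ) < a + b) := by
  classical
  set p : Fin (a + (1+b)) := ⟨a, by omega⟩ with hp
  have hmax : ∀ x, (σ x : ℕ) ≤ (σ p : ℕ) := by
    intro x; rw [hm]; have := (σ x).isLt; omega
  have hlr : ∀ i k : Fin (a + (1+b)), (i:ℕ) < a → a < (k:ℕ) → (σ i : ℕ) < (σ k : ℕ) := by
    intro i k hi hk
    exact left_lt_right σ hσ p i k hmax (by simp [hp, Fin.lt_def]; omega)
      (by simp [hp, Fin.lt_def]; omega)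
  -- values at positions > a are < a+b and ≠ max
  have hub : ∀ k : Fin (a + (1+b)), (k:ℕ) ≠ a → (σ k : ℕ) < a + b := by
    intro k hk
    have h1 : (σ k : ℕ) ≤ a + b := hm ▸ hmax k
    have h2 : σ k ≠ σ p := fun e => hk (congrArg Fin.val (σ.injective e))
    have : (σ k : ℕ) ≠ a + b := fun e => h2 (Fin.ext (by rw [e, hm]))
    omega
  -- pigeonhole step 1
  have step1 : ∀ i : Fin (a + (1+b)), (i:ℕ) < a → (σ i : ℕ) < a := by
    intro i hi
    by_contra hbad
    push_neg at hbad
    -- positions with σ-value ≥ a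
    set P : Finset (Fin (a + (1+b))) := Finset.univ.filter (fun x => a ≤ (σ x : ℕ)) with hP
    set V : Finset (Fin (a + (1+b))) := Finset.univ.filter (fun v => a ≤ (v : ℕ)) with hV
    have hPV : P.card = V.card := by
      have himg : P.image σ = V := by
        apply Finset.ext
        intro v
        simp only [hP, hV, Finset.mem_image, Finset.mem_filter, Finset.mem_univ, true_and]
        constructor
        · rintro ⟨x, hx, rfl⟩; exact hx
        · intro hv; exact ⟨σ.symm v, by simp [hv], by simp⟩
      rw [← himg, Finset.card_image_of_injective _ σ.injective]
    have hVcard : V.card = 1 + b := by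
      have : V = Finset.Ici p := by
        apply Finset.ext; intro v
        simp [hV, hp, Finset.mem_Ici, Fin.le_def]
      rw [this, Fin.card_Ici]
      show a + (1+b) - a = 1 + b; omega
    have hsub : insert i (insert p (Finset.Ioi p)) ⊆ P := by
      intro x hx
      simp only [Finset.mem_insert, Finset.mem_Ioi] at hx
      simp only [hP, Finset.mem_filter, Finset.mem_univ, true_and]
      rcases hx with rfl | rfl | hx
      · exact hbad
      · rw [hm]; omega
      · have : a < (x:ℕ) := by simpa [hp, Fin.lt_def] using hx
        have := hlr i x hi this; omega
    have hcard : (insert i (insert p (Finset.Ioi p))).card = b + 2 := by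
      rw [Finset.card_insert_of_notMem, Finset.card_insert_of_notMem, Fin.card_Ioi]
      · show a + (1+b) - 1 - a + 1 + 1 = b + 2; omega
      · simp [Finset.mem_Ioi]
      · simp only [Finset.mem_insert, Finset.mem_Ioi]
        push_neg
        refine ⟨?_, ?_⟩
        · intro e; rw [e] at hi; exact absurd hi (lt_irrefl a)
        · exact le_of_lt (by rw [Fin.lt_def]; exact hi)
    have := Finset.card_le_card hsub
    omega
  refine ⟨step1, ?_⟩
  -- step 2
  intro k hk
  refine ⟨?_, hub k (by omega)⟩
  by_contra hbad
  push_neg at hbad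
  set P : Finset (Fin (a + (1+b))) := Finset.univ.filter (fun x => (σ x : ℕ) < a) with hP
  set V : Finset (Fin (a + (1+b))) := Finset.univ.filter (fun v => (v : ℕ) < a) with hV
  have hPV : P.card = V.card := by
    have himg : P.image σ = V := by
      apply Finset.ext
      intro v
      simp only [hP, hV, Finset.mem_image, Finset.mem_filter, Finset.mem_univ, true_and]
      constructor
      · rintro ⟨x, hx, rfl⟩; exact hx
      · intro hv; exact ⟨σ.symm v, by simp [hv], by simp⟩
    rw [← himg, Finset.card_image_of_injective _ σ.injective]
  have hVcard : V.card = a := by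
    have : V = Finset.Iio p := by
      apply Finset.ext; intro v
      simp [hV, hp, Finset.mem_Iio, Fin.lt_def]
    rw [this, Fin.card_Iio]
  have hsub : insert k (Finset.Iio p) ⊆ P := by
    intro x hx
    simp only [Finset.mem_insert, Finset.mem_Iio] at hx
    simp only [hP, Finset.mem_filter, Finset.mem_univ, true_and]
    rcases hx with rfl | hx
    · exact hbad
    · exact step1 x (by simpa [hp, Fin.lt_def] using hx)
  have hcard : (insert k (Finset.Iio p)).card = a + 1 := by
    rw [Finset.card_insert_of_notMem, Fin.card_Iio]
    simp only [Finset.mem_Iio]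
    exact fun h => absurd (show (k:ℕ) < a from h) (by omega)
  have := Finset.card_le_card hsub
  omega



noncomputable def A (n : ℕ) : ℕ := Nat.card {σ : Equiv.Perm (Fin n) // Avoids σ}

lemma G_injective {a b : ℕ} :
    Function.Injective (fun q : Equiv.Perm (Fin a) × Equiv.Perm (Fin b) => G q.1 q.2) := by
  rintro ⟨τ, π⟩ ⟨τ', π'⟩ h
  simp only at h
  have h1 : τ = τ' := by
    refine Equiv.ext fun x => Fin.ext ?_
    have h1 := G_val_lt τ π (Fin.castAdd (1+b) x) x rfl
    have h2 := G_val_lt τ' π' (Fin.castAdd (1+b) x) x rfl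
    rw [h] at h1; omega
  have h2 : π = π' := by
    refine Equiv.ext fun y => Fin.ext ?_
    have h1 := G_val_gt τ π (Fin.natAdd a (Fin.natAdd 1 y)) y (by simp only [Fin.coe_natAdd]; omega)
    have h2 := G_val_gt τ' π' (Fin.natAdd a (Fin.natAdd 1 y)) y (by simp only [Fin.coe_natAdd]; omega)
    rw [h] at h1; omega
  simp [h1, h2]

/-- Every avoiding permutation with max at position `a` is `G τ π`. -/
lemma G_surjective {a b : ℕ} (σ : Equiv.Perm (Fin (a + (1+b)))) (hσ : Avoids σ)
    (hm : (σ ⟨a, by omega⟩ : ℕ) = a + b) :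
    ∃ τ : Equiv.Perm (Fin a), ∃ π : Equiv.Perm (Fin b), G τ π = σ := by
  classical
  obtain ⟨hL, hR⟩ := left_small σ hσ hm
  -- τ
  have τinj : Function.Injective (fun x : Fin a =>
      (⟨(σ (Fin.castAdd (1+b) x) : ℕ), hL _ (by simp)⟩ : Fin a)) := by
    intro x y hxy
    simp only [Fin.mk.injEq] at hxy
    have := σ.injective (Fin.ext hxy : σ (Fin.castAdd (1+b) x) = σ (Fin.castAdd (1+b) y))
    exact Fin.ext (by simpa [Fin.ext_iff] using this)
  have πinj : Function.Injective (fun y : Fin b =>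
      (⟨(σ (Fin.natAdd a (Fin.natAdd 1 y)) : ℕ) - a, by
        have := (hR (Fin.natAdd a (Fin.natAdd 1 y)) (by simp only [Fin.coe_natAdd]; omega))
        omega⟩ : Fin b)) := by
    intro x y hxy
    simp only [Fin.mk.injEq] at hxy
    have hx := hR (Fin.natAdd a (Fin.natAdd 1 x)) (by simp only [Fin.coe_natAdd]; omega)
    have hy := hR (Fin.natAdd a (Fin.natAdd 1 y)) (by simp only [Fin.coe_natAdd]; omega)
    have : σ (Fin.natAdd a (Fin.natAdd 1 x)) = σ (Fin.natAdd a (Fin.natAdd 1 y)) :=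
      Fin.ext (by omega)
    have := σ.injective this
    exact Fin.ext (by simpa [Fin.ext_iff] using this)
  set τ : Equiv.Perm (Fin a) :=
    Equiv.ofBijective _ (Finite.injective_iff_bijective.mp τinj) with hτ
  set π : Equiv.Perm (Fin b) :=
    Equiv.ofBijective _ (Finite.injective_iff_bijective.mp πinj) with hπ
  refine ⟨τ, π, ?_⟩
  apply Equiv.ext
  intro z
  apply Fin.ext
  rcases lt_trichotomy (z:ℕ) a with hz | hz | hz
  · rw [G_val_lt τ π z ⟨z, hz⟩ rfl]
    have e1 : (τ ⟨z, hz⟩ : ℕ) = (σ (Fin.castAdd (1+b) ⟨z, hz⟩) : ℕ) := by rw [hτ]; rfl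
    have e2 := congrArg Fin.val (congrArg σ (show Fin.castAdd (1+b) (⟨z, hz⟩ : Fin a) = z from Fin.ext rfl))
    omega
  · rw [G_val_eq τ π z hz]
    have e2 := congrArg Fin.val (congrArg σ (show (⟨a, by omega⟩ : Fin (a + (1+b))) = z from Fin.ext hz.symm))
    omega
  · have hz' := z.isLt
    have hb : (z:ℕ) - (a+1) < b := by omega
    rw [G_val_gt τ π z ⟨(z:ℕ) - (a+1), hb⟩ (by show (z:ℕ) = a+1+((z:ℕ)-(a+1)); omega)]
    have e1 : (π ⟨(z:ℕ) - (a+1), hb⟩ : ℕ)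
        = (σ (Fin.natAdd a (Fin.natAdd 1 ⟨(z:ℕ) - (a+1), hb⟩)) : ℕ) - a := by rw [hπ]; rfl
    have e2 := congrArg Fin.val (congrArg σ
      (show Fin.natAdd a (Fin.natAdd 1 (⟨(z:ℕ) - (a+1), hb⟩ : Fin b)) = z from
        Fin.ext (by show a + (1 + ((z:ℕ)-(a+1))) = (z:ℕ); omega)))
    have e3 := hR (Fin.natAdd a (Fin.natAdd 1 (⟨(z:ℕ) - (a+1), hb⟩ : Fin b)))
      (by simp only [Fin.coe_natAdd]; omega)
    omega

lemma card_fiber (a b : ℕ) :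
    Nat.card {σ : Equiv.Perm (Fin (a + (1+b))) // Avoids σ ∧ (σ ⟨a, by omega⟩ : ℕ) = a + b} =
      A a * A b := by
  classical
  rw [A, A, ← Nat.card_prod]
  apply Nat.card_congr
  apply Equiv.symm
  refine Equiv.ofBijective (fun q => ⟨G q.1.1 q.2.1, (avoids_G _ _).mpr ⟨q.1.2, q.2.2⟩,
    G_val_eq q.1.1 q.2.1 _ rfl⟩) ⟨?_, ?_⟩
  · rintro ⟨⟨τ, hτ⟩, ⟨π, hπ⟩⟩ ⟨⟨τ', hτ'⟩, ⟨π', hπ'⟩⟩ h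
    simp only [Subtype.mk.injEq] at h
    have := G_injective (a := a) (b := b) (show (fun q : Equiv.Perm (Fin a) × Equiv.Perm (Fin b) => G q.1 q.2) (τ, π) = (fun q : Equiv.Perm (Fin a) × Equiv.Perm (Fin b) => G q.1 q.2) (τ', π') from h)
    simp only [Prod.mk.injEq] at this
    simp only [Prod.mk.injEq, Subtype.mk.injEq]
    exact this
  · rintro ⟨σ, hσ, hm⟩
    obtain ⟨τ, π, hG⟩ := G_surjective σ hσ hm
    have hτ : Avoids τ := ((avoids_G τ π).mp (hG ▸ hσ)).1
    have hπ : Avoids π := ((avoids_G τ π).mp (hG ▸ hσ)).2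
    exact ⟨⟨⟨τ, hτ⟩, ⟨π, hπ⟩⟩, Subtype.ext hG⟩


lemma avoids_permCongr {m m' : ℕ} (h : m = m') (σ : Equiv.Perm (Fin m)) :
    Avoids ((finCongr h).permCongr σ) ↔ Avoids σ := by
  subst h
  have e : (finCongr rfl).permCongr σ = σ := by
    apply Equiv.ext; intro x; simp [Equiv.permCongr_apply]
  rw [e]

lemma nat_card_sigma {ι : Type} [Fintype ι] (f : ι → Type) [∀ i, Finite (f i)] :
    Nat.card (Σ i, f i) = ∑ i, Nat.card (f i) := by
  classical
  have := fun i => Fintype.ofFinite (f i)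
  simp [Nat.card_eq_fintype_card]

lemma A_zero : A 0 = 1 := by
  have hall : ∀ σ : Equiv.Perm (Fin 0), Avoids σ := by
    rintro σ ⟨i, _⟩; exact i.elim0
  rw [A, Nat.card_congr (Equiv.subtypeUnivEquiv hall), Nat.card_eq_fintype_card]
  simp

lemma A_succ (n : ℕ) : A (n+1) = ∑ i : Fin (n+1), A i * A (n - i) := by
  classical
  have e1 : {σ : Equiv.Perm (Fin (n+1)) // Avoids σ} ≃
      Σ p : Fin (n+1), {s : {σ : Equiv.Perm (Fin (n+1)) // Avoids σ} //
        s.1.symm (Fin.last n) = p} :=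
    (Equiv.sigmaFiberEquiv _).symm
  rw [A, Nat.card_congr e1, nat_card_sigma]
  refine Finset.sum_congr rfl fun p _ => ?_
  have hp : (p:ℕ) ≤ n := by have := p.isLt; omega
  have h : (p:ℕ) + (1 + (n - (p:ℕ))) = n + 1 := by omega
  rw [← card_fiber (p:ℕ) (n - (p:ℕ))]
  refine Nat.card_congr (Equiv.trans (Equiv.subtypeSubtypeEquivSubtypeInter
      (fun σ : Equiv.Perm (Fin (n+1)) => Avoids σ)
      (fun σ : Equiv.Perm (Fin (n+1)) => σ.symm (Fin.last n) = p))
    (Equiv.subtypeEquiv ((finCongr h).permCongr) fun σ => ?_).symm)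
  have harg : ((finCongr h).symm p : Fin ((p:ℕ) + (1 + (n - (p:ℕ))))) = ⟨(p:ℕ), by omega⟩ := by
    apply Fin.ext; simp
  constructor
  · rintro ⟨h1, h2⟩
    refine ⟨(avoids_permCongr h σ).mpr h1, ?_⟩
    rw [Equiv.symm_apply_eq]
    apply Fin.ext
    rw [Equiv.permCongr_apply, harg]
    simp only [Fin.val_last, finCongr_apply, Fin.coe_cast]
    omega
  · rintro ⟨h1, h2⟩
    refine ⟨(avoids_permCongr h σ).mp h1, ?_⟩
    rw [Equiv.symm_apply_eq] at h2
    have := congrArg Fin.val h2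
    rw [Equiv.permCongr_apply, harg] at this
    simp only [Fin.val_last, finCongr_apply, Fin.coe_cast] at this
    omega

lemma A_eq_catalan : ∀ n, A n = catalan n := by
  intro n
  induction n using Nat.strong_induction_on with
  | _ n ih =>
    match n with
    | 0 => simp [A_zero]
    | (m+1) =>
      rw [A_succ, catalan_succ]
      refine Finset.sum_congr rfl fun i _ => ?_
      rw [ih i (by have := i.isLt; omega), ih (m - (i:ℕ)) (by omega)]


lemma catalan_ne_zero (n : ℕ) : catalan n ≠ 0 := by
  intro h
  have h1 := succ_mul_catalan_eq_centralBinom n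
  rw [h, Nat.mul_zero] at h1
  have := n.centralBinom_pos
  omega

lemma count1 (ρ : FinPerm) (hr : Avoids ρ.2) (b : ℕ) :
    Nat.card {σ : Equiv.Perm (Fin (ρ.1 + (1 + b))) // Avoids σ ∧
      ∃ π : FinPerm, (⟨ρ.1 + (1 + b), σ⟩ : FinPerm) = glue ρ π} = catalan b := by
  classical
  rw [← A_eq_catalan, A]
  apply Nat.card_congr
  apply Equiv.symm
  refine Equiv.ofBijective (fun q => ⟨G ρ.2 q.1, (avoids_G ρ.2 q.1).mpr ⟨hr, q.2⟩,
    ⟨⟨b, q.1⟩, rfl⟩⟩) ⟨?_, ?_⟩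
  · rintro ⟨π, hπ⟩ ⟨π', hπ'⟩ h
    simp only [Subtype.mk.injEq] at h
    have := G_injective (a := ρ.1) (b := b)
      (show (fun q : Equiv.Perm (Fin ρ.1) × Equiv.Perm (Fin b) => G q.1 q.2) (ρ.2, π)
        = (fun q : Equiv.Perm (Fin ρ.1) × Equiv.Perm (Fin b) => G q.1 q.2) (ρ.2, π') from h)
    simp only [Prod.mk.injEq] at this
    exact Subtype.ext this.2
  · rintro ⟨σ, hA, ⟨⟨m, q⟩, hEq⟩⟩
    have hsz : ρ.1 + (1 + b) = ρ.1 + (1 + m) := congrArg Sigma.fst hEq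
    have hm : m = b := by omega
    subst hm
    injection hEq with h1 h2
    have hσ : σ = G ρ.2 q := h2
    have hq : Avoids q := ((avoids_G ρ.2 q).mp (hσ ▸ hA)).2
    exact ⟨⟨q, hq⟩, Subtype.ext hσ.symm⟩

lemma count2 (ρ : FinPerm) (hr : Avoids ρ.2) (t : ℕ) :
    Nat.card {σ : Equiv.Perm (Fin (t + (1 + ρ.1))) // Avoids σ ∧
      ∃ τ : FinPerm, (⟨t + (1 + ρ.1), σ⟩ : FinPerm) = glue τ ρ} = catalan t := by
  classical
  rw [← A_eq_catalan, A]
  apply Nat.card_congr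
  apply Equiv.symm
  refine Equiv.ofBijective (fun q => ⟨G q.1 ρ.2, (avoids_G q.1 ρ.2).mpr ⟨q.2, hr⟩,
    ⟨⟨t, q.1⟩, rfl⟩⟩) ⟨?_, ?_⟩
  · rintro ⟨π, hπ⟩ ⟨π', hπ'⟩ h
    simp only [Subtype.mk.injEq] at h
    have := G_injective (a := t) (b := ρ.1)
      (show (fun q : Equiv.Perm (Fin t) × Equiv.Perm (Fin ρ.1) => G q.1 q.2) (π, ρ.2)
        = (fun q : Equiv.Perm (Fin t) × Equiv.Perm (Fin ρ.1) => G q.1 q.2) (π', ρ.2) from h)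
    simp only [Prod.mk.injEq] at this
    exact Subtype.ext this.1
  · rintro ⟨σ, hA, ⟨⟨m, q⟩, hEq⟩⟩
    have hsz : t + (1 + ρ.1) = m + (1 + ρ.1) := congrArg Sigma.fst hEq
    have hm : m = t := by omega
    subst hm
    injection hEq with h1 h2
    have hσ : σ = G q ρ.2 := h2
    have hq : Avoids q := ((avoids_G q ρ.2).mp (hσ ▸ hA)).1
    exact ⟨⟨q, hq⟩, Subtype.ext hσ.symm⟩

lemma catalan_ratio :
    Tendsto (fun n : ℕ => (catalan n : ℝ) / catalan (n+1)) atTop (𝓝 (1/4)) := by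
  have key : ∀ n : ℕ, (n+2) * catalan (n+1) = 2*(2*n+1) * catalan n := by
    intro n
    have h1 := succ_mul_catalan_eq_centralBinom (n+1)
    have h2 := Nat.succ_mul_centralBinom_succ n
    have h3 := succ_mul_catalan_eq_centralBinom n
    have h4 : (n+1) * ((n+2) * catalan (n+1)) = (n+1) * (2*(2*n+1) * catalan n) := by
      calc (n+1) * ((n+2) * catalan (n+1))
          = (n+1) * ((n+1+1) * catalan (n+1)) := by ring
        _ = (n+1) * Nat.centralBinom (n+1) := by rw [h1]
        _ = 2*(2*n+1) * Nat.centralBinom n := h2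
        _ = 2*(2*n+1) * ((n+1) * catalan n) := by rw [h3]
        _ = (n+1) * (2*(2*n+1) * catalan n) := by ring
    exact Nat.eq_of_mul_eq_mul_left (by omega) h4
  have hfun : ∀ n : ℕ, (catalan n : ℝ)/catalan (n+1) = ((n:ℝ)+2)/(2*(2*(n:ℝ)+1)) := by
    intro n
    rw [div_eq_div_iff (by exact_mod_cast catalan_ne_zero (n+1)) (by positivity)]
    have := key n
    have : ((n:ℝ)+2) * (catalan (n+1) : ℝ) = 2*(2*(n:ℝ)+1) * (catalan n : ℝ) := by
      exact_mod_cast this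
    linarith
  have t1 : Tendsto (fun n : ℕ => 2/((n:ℝ))) atTop (𝓝 0) :=
    tendsto_const_div_atTop_nhds_zero_nat 2
  have tnum : Tendsto (fun n : ℕ => 1 + 2/((n:ℝ))) atTop (𝓝 1) := by
    simpa using tendsto_const_nhds.add t1
  have tden : Tendsto (fun n : ℕ => 4 + 2/((n:ℝ))) atTop (𝓝 4) := by
    simpa using tendsto_const_nhds.add t1
  have tdiv := tnum.div tden (by norm_num)
  norm_num at tdiv
  refine Tendsto.congr' ?_ tdiv
  filter_upwards [Filter.eventually_ge_atTop 1] with n hn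
  have hn' : (0:ℝ) < (n:ℝ) := by exact_mod_cast hn
  simp only [Pi.div_apply]
  rw [hfun n, div_eq_div_iff (by positivity) (by positivity)]
  field_simp
  ring

lemma catalan_ratio_pow (k : ℕ) :
    Tendsto (fun n : ℕ => (catalan n : ℝ) / catalan (n+k)) atTop (𝓝 ((1/4:ℝ)^k)) := by
  induction k with
  | zero =>
    have he : (fun n : ℕ => (catalan n : ℝ)/catalan (n+0)) = fun _ => 1 := by
      funext n
      rw [Nat.add_zero, div_self (by exact_mod_cast catalan_ne_zero n)]
    rw [he, pow_zero]
    exact tendsto_const_nhds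
  | succ k ihk =>
    have h2 : Tendsto (fun n : ℕ => (catalan (n+k) : ℝ) / catalan (n+k+1)) atTop (𝓝 (1/4)) :=
      catalan_ratio.comp (Filter.tendsto_add_atTop_nat k)
    have hmul := ihk.mul h2
    rw [← pow_succ] at hmul
    refine Tendsto.congr (fun n => ?_) hmul
    have hb : (catalan (n+k) : ℝ) ≠ 0 := by exact_mod_cast catalan_ne_zero (n+k)
    calc (catalan n : ℝ)/catalan (n+k) * ((catalan (n+k):ℝ)/catalan (n+k+1))
        = ((catalan (n+k):ℝ) * catalan n) / ((catalan (n+k):ℝ) * catalan (n+k+1)) := by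
          rw [div_mul_div_comm]; ring_nf
      _ = (catalan n : ℝ) / catalan (n+(k+1)) := mul_div_mul_left _ _ hb

lemma tail_ratio (k : ℕ) :
    Tendsto (fun n : ℕ => (catalan (n - k) : ℝ) / catalan n) atTop (𝓝 ((1/4:ℝ)^k)) := by
  have hcomp := (catalan_ratio_pow k).comp (Filter.tendsto_sub_atTop_nat k)
  refine Tendsto.congr' ?_ hcomp
  filter_upwards [Filter.eventually_ge_atTop k] with n hn
  simp only [Function.comp]
  rw [Nat.sub_add_cancel hn]

/-- Decomposing a uniform random 231-avoiding permutation of size `n` as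
`σ = τ ⊕ (1 ⊖ π)`, for every fixed 231-avoiding `ρ` the probabilities
`P(τ = ρ)` and `P(π = ρ)` both converge to `4^{-|ρ|-1}`. -/
theorem part_distribution_limit (ρ : FinPerm) (hρ : AvoidsF ρ) :
    Tendsto (fun n : ℕ => (Nat.card {σ : Equiv.Perm (Fin n) //
          Avoids σ ∧ ∃ π : FinPerm, (⟨n, σ⟩ : FinPerm) = glue ρ π} : ℝ) / (catalan n : ℝ))
        atTop (𝓝 ((4 : ℝ) ^ (-(ρ.1 : ℤ) - 1))) ∧
    Tendsto (fun n : ℕ => (Nat.card {σ : Equiv.Perm (Fin n) //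
          Avoids σ ∧ ∃ τ : FinPerm, (⟨n, σ⟩ : FinPerm) = glue τ ρ} : ℝ) / (catalan n : ℝ))
        atTop (𝓝 ((4 : ℝ) ^ (-(ρ.1 : ℤ) - 1))) := by
  have hconv : (4:ℝ) ^ (-(ρ.1:ℤ) - 1) = (1/4:ℝ)^(ρ.1+1) := by
    rw [show (-(ρ.1:ℤ) - 1) = -((ρ.1+1 : ℕ) : ℤ) by push_cast; ring, zpow_neg, zpow_natCast,
      one_div, inv_pow]
  rw [hconv]
  constructor
  · refine Tendsto.congr' ?_ (tail_ratio (ρ.1 + 1))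
    filter_upwards [Filter.eventually_ge_atTop (ρ.1+1)] with n hn
    obtain ⟨b, rfl⟩ : ∃ b, n = ρ.1 + (1+b) := ⟨n - (ρ.1+1), by omega⟩
    rw [count1 ρ hρ b, show ρ.1+(1+b)-(ρ.1+1) = b from by omega]
  · refine Tendsto.congr' ?_ (tail_ratio (ρ.1 + 1))
    filter_upwards [Filter.eventually_ge_atTop (ρ.1+1)] with n hn
    obtain ⟨t, rfl⟩ : ∃ t, n = t + (1 + ρ.1) := ⟨n - (ρ.1+1), by omega⟩
    rw [count2 ρ hρ t, show t+(1+ρ.1)-(ρ.1+1) = t from by omega]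

end Av231
end

section
/- Fix k ≥ 2 and let G_k be the dependency graph of the type-refined system for Av(231): vertices are the types in 𝒯_k, with an edge u → t whenever ∂F_t/∂C_u ≠ 0, where F_t(z; C_u, u ∈ 𝒯_k) = δ_{t,∅} + z Σ_{H_k(t_1,t_2)=t} C_{t_1} C_{t_2}. Then for any two vertices u_1, u_2 of G_k there exists a vertex t with edges u_1 → t and u_2 → t (namely t = H_k(u_1,u_2)); consequently, G_k has a unique terminal strongly connected component. -/
open FirstOrder Filter Asymptotics Topology

/-- `k`-equivalence as a setoid on finite permutations. -/
def kSetoid (k : ℕ) : Setoid Av231.FinPerm :=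
  ⟨Av231.kEquiv k,
    ⟨fun _ _ _ => Iff.rfl, fun h ψ hψ => (h ψ hψ).symm,
      fun h h' ψ hψ => (h ψ hψ).trans (h' ψ hψ)⟩⟩

namespace Av231

/-- Logical types of order `k`: equivalence classes of `≡ₖ`. -/
def QT (k : ℕ) := Quotient (kSetoid k)

/-- The logical type of order `k` of a permutation. -/
def typeOf (k : ℕ) (p : FinPerm) : QT k := Quotient.mk (kSetoid k) p

/-- A type is realized when some `231`-avoiding permutation has this type;
`𝒯ₖ` consists of the realized types. -/
def Realized (k : ℕ) (t : QT k) : Prop := ∃ p : FinPerm, AvoidsF p ∧ typeOf k p = t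

/-- The number of `231`-avoiding permutations of size `n` whose logical type of order `k`
is `t`, i.e. the `n`-th coefficient of the generating series `C_t`. -/
noncomputable def cnt (k : ℕ) (t : QT k) (n : ℕ) : ℕ :=
  Nat.card {σ : Equiv.Perm (Fin n) // Avoids σ ∧ typeOf k ⟨n, σ⟩ = t}

/-- The type of the empty permutation. -/
def emptyType (k : ℕ) : QT k := typeOf k ⟨0, 1⟩

/-- `H_k(t₁,t₂)`: the type of `τ ⊕ (1 ⊖ π)` where `τ, π` are representatives
of `t₁, t₂` respectively. -/
noncomputable def Hfun (k : ℕ) (t₁ t₂ : QT k) : QT k :=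
  typeOf k (glue (Quotient.out t₁) (Quotient.out t₂))

/-- The edge relation `u → t` of the dependency graph `G_k`:
`∂F_t/∂C_u ≠ 0`, i.e. some `v ∈ 𝒯ₖ` satisfies `H_k(u,v) = t` or `H_k(v,u) = t`. -/
def Edge (k : ℕ) (u t : QT k) : Prop :=
  ∃ v : QT k, Realized k v ∧ (Hfun k u v = t ∨ Hfun k v u = t)

/-- The set `𝒯ₖ` of types realized by `231`-avoiding permutations, as a type. -/
def Tk (k : ℕ) := {t : QT k // Realized k t}

/-- The edge relation of `G_k` restricted to `𝒯ₖ`. -/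
def EdgeT (k : ℕ) (u t : Tk k) : Prop := Edge k u.1 t.1

/-- `S` is a terminal strongly connected component of the dependency graph `G_k`:
it is nonempty, any vertex of `S` reaches any other, and no edge leaves `S`
(this forces maximality, hence being an SCC). -/
def IsTermSCC (k : ℕ) (S : Set (Tk k)) : Prop :=
  S.Nonempty ∧ (∀ u ∈ S, ∀ v ∈ S, Relation.ReflTransGen (EdgeT k) u v) ∧
    (∀ u ∈ S, ∀ v : Tk k, EdgeT k u v → v ∈ S)

/-- A sequence of coefficients is periodic when, for some `d ≥ 2` and `r`,
it vanishes outside `dℤ + r`. -/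
def SeqPeriodic (a : ℕ → ℝ) : Prop :=
  ∃ d : ℕ, 2 ≤ d ∧ ∃ r : ℕ, ∀ n : ℕ, n % d ≠ r % d → a n = 0

/-- The generating series `C_t` of `231`-avoiding permutations of type `t`,
evaluated at a complex number `z`. -/
noncomputable def Ct (k : ℕ) (t : QT k) (z : ℂ) : ℂ :=
  ∑' n : ℕ, (cnt k t n : ℂ) * z ^ n

/-- The Catalan generating function. -/
noncomputable def catGF (z : ℂ) : ℂ := ∑' n : ℕ, (catalan n : ℂ) * z ^ n

/-- The entry `M_k(z)_{t,u} = ∂F_t/∂C_u (z; C_v(z), v ∈ 𝒯ₖ)` of the Jacobian matrix of the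
type-refined system. -/
noncomputable def Mmat (k : ℕ) (z : ℂ) (t u : QT k) : ℂ :=
  z * ((∑' v : {v : QT k // Realized k v ∧ Hfun k u v = t}, Ct k v.1 z) +
       (∑' v : {v : QT k // Realized k v ∧ Hfun k v u = t}, Ct k v.1 z))

/-- `lam` is an eigenvalue of the (possibly infinite) matrix `A`, witnessed by a finitely
supported eigenvector. For finite index types this is the usual notion of eigenvalue. -/
def IsEig {α : Type*} (A : α → α → ℂ) (lam : ℂ) : Prop :=
  ∃ v : α →₀ ℂ, v ≠ 0 ∧ ∀ x : α, ∑ y ∈ v.support, A x y * v y = lam * v x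



/-! ### Auxiliary machinery for the proof -/

section Aux

set_option linter.unnecessarySeqFocus false
set_option linter.unreachableTactic false
set_option linter.unusedTactic false

/-! #### Embeddings into the glued permutation -/

def embL {n m : ℕ} (x : Fin n) : Fin (n + (1 + m)) := Fin.castAdd (1 + m) x
def embM {n m : ℕ} : Fin (n + (1 + m)) := Fin.natAdd n (Fin.castAdd m (0 : Fin 1))
def embR {n m : ℕ} (y : Fin m) : Fin (n + (1 + m)) := Fin.natAdd n (Fin.natAdd 1 y)

@[simp] lemma embL_val {n m : ℕ} (x : Fin n) : ((embL x : Fin (n + (1+m))) : ℕ) = x := rfl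
@[simp] lemma embM_val {n m : ℕ} : ((embM : Fin (n + (1+m))) : ℕ) = n := by simp [embM]
@[simp] lemma embR_val {n m : ℕ} (y : Fin m) :
    ((embR y : Fin (n + (1+m))) : ℕ) = n + (1 + y) := rfl

lemma dsum_castAdd {a b : ℕ} (σ : Equiv.Perm (Fin a)) (τ : Equiv.Perm (Fin b)) (x : Fin a) :
    dsum σ τ (Fin.castAdd b x) = Fin.castAdd b (σ x) := by
  simp [dsum, Equiv.permCongr_apply]

lemma dsum_natAdd {a b : ℕ} (σ : Equiv.Perm (Fin a)) (τ : Equiv.Perm (Fin b)) (y : Fin b) :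
    dsum σ τ (Fin.natAdd a y) = Fin.natAdd a (τ y) := by
  simp [dsum, Equiv.permCongr_apply]

lemma ssum_one_val_left {m : ℕ} (π : Equiv.Perm (Fin m)) :
    (((ssum (1 : Equiv.Perm (Fin 1)) π) (Fin.castAdd m (0 : Fin 1))) : ℕ) = m := by
  simp [ssum]

lemma ssum_one_val_right {m : ℕ} (π : Equiv.Perm (Fin m)) (v : Fin m) :
    (((ssum (1 : Equiv.Perm (Fin 1)) π) (Fin.natAdd 1 v)) : ℕ) = π v := by
  simp [ssum]

lemma glue_vL (p q : FinPerm) (x : Fin p.1) :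
    (((glue p q).2 (embL x)) : ℕ) = p.2 x := by
  show ((dsum p.2 (ssum 1 q.2) (Fin.castAdd _ x)) : ℕ) = p.2 x
  rw [dsum_castAdd]; rfl

lemma glue_vM (p q : FinPerm) :
    (((glue p q).2 (embM)) : ℕ) = p.1 + q.1 := by
  show ((dsum p.2 (ssum 1 q.2) (Fin.natAdd _ _)) : ℕ) = _
  rw [dsum_natAdd, Fin.coe_natAdd, ssum_one_val_left]

lemma glue_vR (p q : FinPerm) (y : Fin q.1) :
    (((glue p q).2 (embR y)) : ℕ) = p.1 + q.2 y := by
  show ((dsum p.2 (ssum 1 q.2) (Fin.natAdd _ (Fin.natAdd 1 y))) : ℕ) = _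
  rw [dsum_natAdd, Fin.coe_natAdd, ssum_one_val_right]

lemma cases3 {n m : ℕ} (c : Fin (n + (1 + m))) :
    (∃ x, c = embL x) ∨ c = embM ∨ ∃ y, c = embR y := by
  rcases h : finSumFinEquiv.symm c with x | w
  · left
    exact ⟨x, by rw [← finSumFinEquiv.apply_symm_apply c, h, finSumFinEquiv_apply_left]; rfl⟩
  · have hc : c = Fin.natAdd n w := by
      rw [← finSumFinEquiv.apply_symm_apply c, h, finSumFinEquiv_apply_right]
    rcases h2 : finSumFinEquiv.symm w with z | y
    · right; left
      have hw : w = Fin.castAdd m z := by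
        rw [← finSumFinEquiv.apply_symm_apply w, h2, finSumFinEquiv_apply_left]
      rw [hc, hw, Subsingleton.elim z (0 : Fin 1)]; rfl
    · right; right
      refine ⟨y, ?_⟩
      have hw : w = Fin.natAdd 1 y := by
        rw [← finSumFinEquiv.apply_symm_apply w, h2, finSumFinEquiv_apply_right]
      rw [hc, hw]; rfl

lemma glue_lt (p q : FinPerm) (a b : Fin (p.1 + (1 + q.1))) :
    @LT.lt (Fin (glue p q).1) _ a b ↔ a.val < b.val := Iff.rfl
lemma glue_eq (p q : FinPerm) (a b : Fin (p.1 + (1 + q.1))) :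
    @Eq (Fin (glue p q).1) a b ↔ a.val = b.val := Fin.ext_iff

lemma glue_avoids (p q : FinPerm) (hp : Avoids p.2) (hq : Avoids q.2) :
    Avoids (glue p q).2 := by
  rintro ⟨i, j, kk, h1, h2, h3, h4⟩
  rcases cases3 i with ⟨xi, rfl⟩ | rfl | ⟨yi, rfl⟩ <;>
    rcases cases3 j with ⟨xj, rfl⟩ | rfl | ⟨yj, rfl⟩ <;>
      rcases cases3 kk with ⟨xk, rfl⟩ | rfl | ⟨yk, rfl⟩ <;>
        simp only [Fin.lt_def, embL_val, embM_val, embR_val, glue_lt, glue_vL, glue_vM, glue_vR]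
          at h1 h2 h3 h4 <;>
        first
          | omega
          | (try have := xi.is_lt) <;> (try have := xj.is_lt) <;> (try have := xk.is_lt) <;>
            (try have := yi.is_lt) <;> (try have := yj.is_lt) <;> (try have := yk.is_lt) <;>
            (try have := (p.2 xi).is_lt) <;> (try have := (p.2 xj).is_lt) <;>
            (try have := (p.2 xk).is_lt) <;>
            (try have := (q.2 yi).is_lt) <;> (try have := (q.2 yj).is_lt) <;>
            (try have := (q.2 yk).is_lt) <;>
            first
              | omega
              | exact hp ⟨xi, xj, xk, by rw [Fin.lt_def]; omega, by rw [Fin.lt_def]; omega,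
                  by rw [Fin.lt_def]; omega, by rw [Fin.lt_def]; omega⟩
              | exact hq ⟨yi, yj, yk, by rw [Fin.lt_def]; omega, by rw [Fin.lt_def]; omega,
                  by rw [Fin.lt_def]; omega, by rw [Fin.lt_def]; omega⟩

/-! #### Finitary Ehrenfeucht–Fraïssé invariants -/

abbrev Ent := Bool × Bool × Bool

def ent {n : ℕ} (σ : Equiv.Perm (Fin n)) (x y : Fin n) : Ent :=
  (decide (x < y), decide (σ x < σ y), decide (x = y))

def tab {n l : ℕ} (σ : Equiv.Perm (Fin n)) (a : Fin l → Fin n) : Fin l → Fin l → Ent :=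
  fun i j => ent σ (a i) (a j)

def ITy : ℕ → ℕ → Type
  | 0, l => Fin l → Fin l → Ent
  | (k+1), l => (Fin l → Fin l → Ent) × Set (ITy k (l+1))

def inv : (k : ℕ) → {l : ℕ} → (p : FinPerm) → (Fin l → Fin p.1) → ITy k l
  | 0, _, p, a => tab p.2 a
  | (k+1), _, p, a => (tab p.2 a, {x | ∃ c, x = inv k p (Fin.snoc a c)})

instance ITy.finite : ∀ (k l : ℕ), Finite (ITy k l)
  | 0, l => by unfold ITy; infer_instance
  | (k+1), l => by
      unfold ITy
      have := ITy.finite k (l+1)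
      infer_instance

lemma inv_tab {k l : ℕ} {p q : FinPerm} {a : Fin l → Fin p.1} {b : Fin l → Fin q.1}
    (h : inv k p a = inv k q b) : tab p.2 a = tab q.2 b := by
  cases k with
  | zero => exact h
  | succ k => exact congrArg Prod.fst h

lemma inv_succ_snd {k l : ℕ} {p q : FinPerm} {a : Fin l → Fin p.1} {b : Fin l → Fin q.1}
    (h : inv (k+1) p a = inv (k+1) q b) :
    {x : ITy k (l+1) | ∃ c, x = inv k p (Fin.snoc a c)} =
    {x : ITy k (l+1) | ∃ d, x = inv k q (Fin.snoc b d)} := congrArg Prod.snd h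

lemma inv_succ_ext {k l : ℕ} {p q : FinPerm} {a : Fin l → Fin p.1} {b : Fin l → Fin q.1}
    (h : inv (k+1) p a = inv (k+1) q b) (c : Fin p.1) :
    ∃ d, inv k p (Fin.snoc a c) = inv k q (Fin.snoc b d) := by
  have h2 := inv_succ_snd h
  have : inv k p (Fin.snoc a c) ∈ {x : ITy k (l+1) | ∃ c, x = inv k p (Fin.snoc a c)} := ⟨c, rfl⟩
  rw [h2] at this
  obtain ⟨d, hd⟩ := this
  exact ⟨d, hd⟩

lemma inv_succ_ext' {k l : ℕ} {p q : FinPerm} {a : Fin l → Fin p.1} {b : Fin l → Fin q.1}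
    (h : inv (k+1) p a = inv (k+1) q b) (d : Fin q.1) :
    ∃ c, inv k p (Fin.snoc a c) = inv k q (Fin.snoc b d) := by
  have h2 := inv_succ_snd h
  have : inv k q (Fin.snoc b d) ∈ {x : ITy k (l+1) | ∃ d, x = inv k q (Fin.snoc b d)} := ⟨d, rfl⟩
  rw [← h2] at this
  obtain ⟨c, hc⟩ := this
  exact ⟨c, hc.symm⟩

lemma inv_eq_iff {k l : ℕ} {p q : FinPerm} {a : Fin l → Fin p.1} {b : Fin l → Fin q.1} :
    inv (k+1) p a = inv (k+1) q b ↔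
      tab p.2 a = tab q.2 b ∧
      (∀ c, ∃ d, inv k p (Fin.snoc a c) = inv k q (Fin.snoc b d)) ∧
      (∀ d, ∃ c, inv k p (Fin.snoc a c) = inv k q (Fin.snoc b d)) := by
  constructor
  · intro h
    exact ⟨inv_tab h, inv_succ_ext h, inv_succ_ext' h⟩
  · rintro ⟨h1, h2, h3⟩
    show (_, _) = (_, _)
    refine Prod.ext h1 ?_
    ext x
    constructor
    · rintro ⟨c, rfl⟩
      obtain ⟨d, hd⟩ := h2 c
      exact ⟨d, hd⟩
    · rintro ⟨d, rfl⟩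
      obtain ⟨c, hc⟩ := h3 d
      exact ⟨c, hc.symm⟩

lemma inv_mono : ∀ (k : ℕ) {l : ℕ} {p q : FinPerm} {a : Fin l → Fin p.1} {b : Fin l → Fin q.1},
    inv (k+1) p a = inv (k+1) q b → inv k p a = inv k q b
  | 0, _, _, _, _, _, h => inv_tab h
  | (k+1), l, p, q, a, b, h => by
      rw [inv_eq_iff]
      refine ⟨inv_tab h, ?_, ?_⟩
      · intro c
        obtain ⟨d, hd⟩ := inv_succ_ext h c
        exact ⟨d, inv_mono k hd⟩
      · intro d
        obtain ⟨c, hc⟩ := inv_succ_ext' h d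
        exact ⟨c, inv_mono k hc⟩

lemma tab_iffs {n m l : ℕ} {σ : Equiv.Perm (Fin n)} {τ : Equiv.Perm (Fin m)}
    {a : Fin l → Fin n} {b : Fin l → Fin m} (h : tab σ a = tab τ b) (i j : Fin l) :
    (a i < a j ↔ b i < b j) ∧ (σ (a i) < σ (a j) ↔ τ (b i) < τ (b j)) ∧
      (a i = a j ↔ b i = b j) := by
  have := congrFun (congrFun h i) j
  simpa [tab, ent, Prod.ext_iff, decide_eq_decide] using this

/-! #### Adequacy of the invariants -/

lemma term_eq_var {l : ℕ} (t : L.Term (Empty ⊕ Fin l)) :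
    ∃ i : Fin l, t = Language.var (Sum.inr i) := by
  cases t with
  | var x =>
    cases x with
    | inl e => exact e.elim
    | inr i => exact ⟨i, rfl⟩
  | func f ts => exact f.elim

def Rea {n : ℕ} (σ : Equiv.Perm (Fin n)) {l : ℕ} (φ : L.BoundedFormula Empty l)
    (v : Empty → Fin n) (xs : Fin l → Fin n) : Prop :=
  @Language.BoundedFormula.Realize L (Fin n) (pStruct σ) Empty l φ v xs

theorem adequacy {l : ℕ} (φ : L.BoundedFormula Empty l) :
    ∀ (k : ℕ) (p q : FinPerm) (a : Fin l → Fin p.1) (b : Fin l → Fin q.1)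
      (vp : Empty → Fin p.1) (vq : Empty → Fin q.1),
      qd φ ≤ k → inv k p a = inv k q b →
      (Rea p.2 φ vp a ↔ Rea q.2 φ vq b) := by
  induction φ with
  | falsum =>
    intro k p q a b vp vq hqd hinv
    exact Iff.rfl
  | equal t₁ t₂ =>
    intro k p q a b vp vq hqd hinv
    obtain ⟨i, rfl⟩ := term_eq_var t₁
    obtain ⟨j, rfl⟩ := term_eq_var t₂
    have ht := tab_iffs (inv_tab hinv) i j
    unfold Rea
    letI := pStruct p.2
    letI := pStruct q.2
    show Language.Term.realize _ _ = Language.Term.realize _ _ ↔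
      Language.Term.realize _ _ = Language.Term.realize _ _
    simp only [Language.Term.realize_var, Sum.elim_inr]
    exact ht.2.2
  | @rel n l' R ts =>
    intro k p q a b vp vq hqd hinv
    unfold Rea
    letI := pStruct p.2
    letI := pStruct q.2
    cases R with
    | lp =>
      obtain ⟨i, hi⟩ := term_eq_var (ts 0)
      obtain ⟨j, hj⟩ := term_eq_var (ts 1)
      have ht := tab_iffs (inv_tab hinv) i j
      show (Language.Term.realize (Sum.elim vp a) (ts 0) <
            Language.Term.realize (Sum.elim vp a) (ts 1)) ↔
           (Language.Term.realize (Sum.elim vq b) (ts 0) <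
            Language.Term.realize (Sum.elim vq b) (ts 1))
      rw [hi, hj]
      simp only [Language.Term.realize_var, Sum.elim_inr]
      exact ht.1
    | lv =>
      obtain ⟨i, hi⟩ := term_eq_var (ts 0)
      obtain ⟨j, hj⟩ := term_eq_var (ts 1)
      have ht := tab_iffs (inv_tab hinv) i j
      show (p.2 (Language.Term.realize (Sum.elim vp a) (ts 0)) <
            p.2 (Language.Term.realize (Sum.elim vp a) (ts 1))) ↔
           (q.2 (Language.Term.realize (Sum.elim vq b) (ts 0)) <
            q.2 (Language.Term.realize (Sum.elim vq b) (ts 1)))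
      rw [hi, hj]
      simp only [Language.Term.realize_var, Sum.elim_inr]
      exact ht.2.1
  | imp f g ihf ihg =>
    intro k p q a b vp vq hqd hinv
    have h1 : qd f ≤ k := le_trans (le_max_left _ _) hqd
    have h2 : qd g ≤ k := le_trans (le_max_right _ _) hqd
    unfold Rea
    show (_ → _) ↔ (_ → _)
    rw [iff_iff_implies_and_implies]
    constructor
    · intro hpq hf
      exact (ihg k p q a b vp vq h2 hinv).mp (hpq ((ihf k p q a b vp vq h1 hinv).mpr hf))
    · intro hqp hf
      exact (ihg k p q a b vp vq h2 hinv).mpr (hqp ((ihf k p q a b vp vq h1 hinv).mp hf))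
  | all f ih =>
    intro k p q a b vp vq hqd hinv
    cases k with
    | zero => exact absurd hqd (by simp [qd])
    | succ k =>
      have hf : qd f ≤ k := Nat.succ_le_succ_iff.mp hqd
      unfold Rea
      letI := pStruct p.2
      letI := pStruct q.2
      rw [Language.BoundedFormula.realize_all, Language.BoundedFormula.realize_all]
      constructor
      · intro hall d
        obtain ⟨c, hc⟩ := inv_succ_ext' hinv d
        exact (ih k p q (Fin.snoc a c) (Fin.snoc b d) vp vq hf hc).mp (hall c)
      · intro hall c
        obtain ⟨d, hd⟩ := inv_succ_ext hinv c
        exact (ih k p q (Fin.snoc a c) (Fin.snoc b d) vp vq hf hd).mpr (hall d)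
/-! ### connectives -/

def mnot {l : ℕ} (φ : L.BoundedFormula Empty l) : L.BoundedFormula Empty l := φ.imp .falsum
def mand {l : ℕ} (φ ψ : L.BoundedFormula Empty l) : L.BoundedFormula Empty l :=
  mnot (φ.imp (mnot ψ))
def mor {l : ℕ} (φ ψ : L.BoundedFormula Empty l) : L.BoundedFormula Empty l := (mnot φ).imp ψ
def mex {l : ℕ} (φ : L.BoundedFormula Empty (l+1)) : L.BoundedFormula Empty l :=
  mnot (.all (mnot φ))

def conj {l : ℕ} : List (L.BoundedFormula Empty l) → L.BoundedFormula Empty l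
  | [] => mnot .falsum
  | φ :: t => mand φ (conj t)

def disj {l : ℕ} : List (L.BoundedFormula Empty l) → L.BoundedFormula Empty l
  | [] => .falsum
  | φ :: t => mor φ (disj t)

@[simp] lemma qd_mnot {l : ℕ} (φ : L.BoundedFormula Empty l) : qd (mnot φ) = qd φ := by
  simp [mnot, qd]
@[simp] lemma qd_mand {l : ℕ} (φ ψ : L.BoundedFormula Empty l) :
    qd (mand φ ψ) = max (qd φ) (qd ψ) := by simp [mand, mnot, qd]
@[simp] lemma qd_mor {l : ℕ} (φ ψ : L.BoundedFormula Empty l) :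
    qd (mor φ ψ) = max (qd φ) (qd ψ) := by simp [mor, mnot, qd]
@[simp] lemma qd_mex {l : ℕ} (φ : L.BoundedFormula Empty (l+1)) : qd (mex φ) = qd φ + 1 := by
  simp [mex, mnot, qd]

lemma qd_conj_le {l k : ℕ} {lst : List (L.BoundedFormula Empty l)}
    (h : ∀ φ ∈ lst, qd φ ≤ k) : qd (conj lst) ≤ k := by
  induction lst with
  | nil => simp [conj, qd]
  | cons φ t ih =>
    rw [conj, qd_mand]
    exact max_le (h φ (by simp)) (ih fun ψ hψ => h ψ (by simp [hψ]))

lemma qd_disj_le {l k : ℕ} {lst : List (L.BoundedFormula Empty l)}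
    (h : ∀ φ ∈ lst, qd φ ≤ k) : qd (disj lst) ≤ k := by
  induction lst with
  | nil => simp [disj, qd]
  | cons φ t ih =>
    rw [disj, qd_mor]
    exact max_le (h φ (by simp)) (ih fun ψ hψ => h ψ (by simp [hψ]))

@[simp] lemma rea_falsum {n l : ℕ} (σ : Equiv.Perm (Fin n)) (v : Empty → Fin n)
    (xs : Fin l → Fin n) : Rea σ (.falsum) v xs ↔ False := Iff.rfl

@[simp] lemma rea_imp {n l : ℕ} (σ : Equiv.Perm (Fin n)) (φ ψ : L.BoundedFormula Empty l)
    (v : Empty → Fin n) (xs : Fin l → Fin n) :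
    Rea σ (φ.imp ψ) v xs ↔ (Rea σ φ v xs → Rea σ ψ v xs) := Iff.rfl

@[simp] lemma rea_all {n l : ℕ} (σ : Equiv.Perm (Fin n)) (φ : L.BoundedFormula Empty (l+1))
    (v : Empty → Fin n) (xs : Fin l → Fin n) :
    Rea σ (.all φ) v xs ↔ ∀ c, Rea σ φ v (Fin.snoc xs c) := Iff.rfl

@[simp] lemma rea_mnot {n l : ℕ} (σ : Equiv.Perm (Fin n)) (φ : L.BoundedFormula Empty l)
    (v : Empty → Fin n) (xs : Fin l → Fin n) :
    Rea σ (mnot φ) v xs ↔ ¬ Rea σ φ v xs := Iff.rfl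

@[simp] lemma rea_mand {n l : ℕ} (σ : Equiv.Perm (Fin n)) (φ ψ : L.BoundedFormula Empty l)
    (v : Empty → Fin n) (xs : Fin l → Fin n) :
    Rea σ (mand φ ψ) v xs ↔ (Rea σ φ v xs ∧ Rea σ ψ v xs) := by
  rw [mand, rea_mnot, rea_imp, rea_mnot]; tauto

@[simp] lemma rea_mor {n l : ℕ} (σ : Equiv.Perm (Fin n)) (φ ψ : L.BoundedFormula Empty l)
    (v : Empty → Fin n) (xs : Fin l → Fin n) :
    Rea σ (mor φ ψ) v xs ↔ (Rea σ φ v xs ∨ Rea σ ψ v xs) := by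
  rw [mor, rea_imp, rea_mnot]; tauto

@[simp] lemma rea_mex {n l : ℕ} (σ : Equiv.Perm (Fin n)) (φ : L.BoundedFormula Empty (l+1))
    (v : Empty → Fin n) (xs : Fin l → Fin n) :
    Rea σ (mex φ) v xs ↔ ∃ c, Rea σ φ v (Fin.snoc xs c) := by
  rw [mex, rea_mnot, rea_all]
  push_neg
  simp

lemma rea_conj {n l : ℕ} (σ : Equiv.Perm (Fin n)) (lst : List (L.BoundedFormula Empty l))
    (v : Empty → Fin n) (xs : Fin l → Fin n) :
    Rea σ (conj lst) v xs ↔ ∀ φ ∈ lst, Rea σ φ v xs := by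
  induction lst with
  | nil => simp [conj]
  | cons φ t ih => simp [conj, ih]

lemma rea_disj {n l : ℕ} (σ : Equiv.Perm (Fin n)) (lst : List (L.BoundedFormula Empty l))
    (v : Empty → Fin n) (xs : Fin l → Fin n) :
    Rea σ (disj lst) v xs ↔ ∃ φ ∈ lst, Rea σ φ v xs := by
  induction lst with
  | nil => simp [disj]
  | cons φ t ih => simp [disj, ih]

/-! ### atomic formulas and literals -/

def plt {l : ℕ} (i j : Fin l) : L.BoundedFormula Empty l :=
  .rel (TwoRel.lp : L.Relations 2) ![Language.var (Sum.inr i), Language.var (Sum.inr j)]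
def vlt {l : ℕ} (i j : Fin l) : L.BoundedFormula Empty l :=
  .rel (TwoRel.lv : L.Relations 2) ![Language.var (Sum.inr i), Language.var (Sum.inr j)]
def peq {l : ℕ} (i j : Fin l) : L.BoundedFormula Empty l :=
  .equal (Language.var (Sum.inr i)) (Language.var (Sum.inr j))

@[simp] lemma qd_plt {l : ℕ} (i j : Fin l) : qd (plt i j) = 0 := rfl
@[simp] lemma qd_vlt {l : ℕ} (i j : Fin l) : qd (vlt i j) = 0 := rfl
@[simp] lemma qd_peq {l : ℕ} (i j : Fin l) : qd (peq i j) = 0 := rfl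

@[simp] lemma rea_plt {n l : ℕ} (σ : Equiv.Perm (Fin n)) (i j : Fin l)
    (v : Empty → Fin n) (xs : Fin l → Fin n) : Rea σ (plt i j) v xs ↔ xs i < xs j := Iff.rfl
@[simp] lemma rea_vlt {n l : ℕ} (σ : Equiv.Perm (Fin n)) (i j : Fin l)
    (v : Empty → Fin n) (xs : Fin l → Fin n) :
    Rea σ (vlt i j) v xs ↔ σ (xs i) < σ (xs j) := Iff.rfl
@[simp] lemma rea_peq {n l : ℕ} (σ : Equiv.Perm (Fin n)) (i j : Fin l)
    (v : Empty → Fin n) (xs : Fin l → Fin n) : Rea σ (peq i j) v xs ↔ xs i = xs j := Iff.rfl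

def lit {l : ℕ} (e : Ent) (i j : Fin l) : L.BoundedFormula Empty l :=
  mand (cond e.1 (plt i j) (mnot (plt i j)))
    (mand (cond e.2.1 (vlt i j) (mnot (vlt i j)))
      (cond e.2.2 (peq i j) (mnot (peq i j))))

@[simp] lemma qd_lit {l : ℕ} (e : Ent) (i j : Fin l) : qd (lit e i j) = 0 := by
  rcases e with ⟨b1, b2, b3⟩
  cases b1 <;> cases b2 <;> cases b3 <;> simp [lit]

lemma rea_lit {n l : ℕ} (σ : Equiv.Perm (Fin n)) (e : Ent) (i j : Fin l)
    (v : Empty → Fin n) (xs : Fin l → Fin n) :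
    Rea σ (lit e i j) v xs ↔ ent σ (xs i) (xs j) = e := by
  rcases e with ⟨b1, b2, b3⟩
  cases b1 <;> cases b2 <;> cases b3 <;>
    simp [lit, ent, Prod.ext_iff]

/-! ### Hintikka formulas -/

def hin0 {n l : ℕ} (σ : Equiv.Perm (Fin n)) (a : Fin l → Fin n) : L.BoundedFormula Empty l :=
  conj (((List.finRange l).product (List.finRange l)).map
    (fun ij => lit (ent σ (a ij.1) (a ij.2)) ij.1 ij.2))

@[simp] lemma qd_hin0 {n l : ℕ} (σ : Equiv.Perm (Fin n)) (a : Fin l → Fin n) :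
    qd (hin0 σ a) = 0 := by
  refine Nat.le_zero.mp (qd_conj_le ?_)
  intro φ hφ
  simp only [List.mem_map] at hφ
  obtain ⟨ij, _, rfl⟩ := hφ
  simp

lemma rea_hin0 {n m l : ℕ} (σ : Equiv.Perm (Fin n)) (τ : Equiv.Perm (Fin m))
    (a : Fin l → Fin n) (v : Empty → Fin m) (b : Fin l → Fin m) :
    Rea τ (hin0 σ a) v b ↔ tab σ a = tab τ b := by
  rw [hin0, rea_conj]
  constructor
  · intro h
    funext i j
    have := h _ (List.mem_map.mpr ⟨(i, j), by simp [List.mem_product], rfl⟩)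
    rw [rea_lit] at this
    exact this.symm
  · intro h φ hφ
    simp only [List.mem_map] at hφ
    obtain ⟨ij, _, rfl⟩ := hφ
    rw [rea_lit]
    exact (congrFun (congrFun h ij.1) ij.2).symm

def hin : (k : ℕ) → {l : ℕ} → (p : FinPerm) → (Fin l → Fin p.1) → L.BoundedFormula Empty l
  | 0, _, p, a => hin0 p.2 a
  | (k+1), _, p, a =>
      mand (hin0 p.2 a)
        (mand (conj ((List.finRange p.1).map (fun c => mex (hin k p (Fin.snoc a c)))))
          (.all (disj ((List.finRange p.1).map (fun c => hin k p (Fin.snoc a c))))))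

lemma qd_hin : ∀ (k : ℕ) {l : ℕ} (p : FinPerm) (a : Fin l → Fin p.1), qd (hin k p a) ≤ k
  | 0, l, p, a => by simp [hin]
  | (k+1), l, p, a => by
      rw [hin, qd_mand, qd_mand]
      refine max_le (by simp) (max_le (qd_conj_le ?_) ?_)
      · intro φ hφ
        simp only [List.mem_map] at hφ
        obtain ⟨c, _, rfl⟩ := hφ
        rw [qd_mex]
        exact Nat.succ_le_succ (qd_hin k p _)
      · show qd (.all _) ≤ k + 1
        have : qd (disj ((List.finRange p.1).map (fun c => hin k p (Fin.snoc a c)))) ≤ k := by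
          refine qd_disj_le ?_
          intro φ hφ
          simp only [List.mem_map] at hφ
          obtain ⟨c, _, rfl⟩ := hφ
          exact qd_hin k p _
        calc qd (.all (disj ((List.finRange p.1).map (fun c => hin k p (Fin.snoc a c)))))
            = _ + 1 := rfl
          _ ≤ k + 1 := Nat.succ_le_succ this

lemma rea_hin : ∀ (k : ℕ) {l : ℕ} (p q : FinPerm) (a : Fin l → Fin p.1)
    (v : Empty → Fin q.1) (b : Fin l → Fin q.1),
    Rea q.2 (hin k p a) v b ↔ inv k p a = inv k q b
  | 0, l, p, q, a, v, b => by
      rw [hin, rea_hin0]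
      exact Iff.rfl
  | (k+1), l, p, q, a, v, b => by
      rw [hin, rea_mand, rea_mand, rea_hin0, inv_eq_iff]
      refine and_congr Iff.rfl (and_congr ?_ ?_)
      · rw [rea_conj]
        constructor
        · intro h c
          have := h _ (List.mem_map.mpr ⟨c, List.mem_finRange c, rfl⟩)
          rw [rea_mex] at this
          obtain ⟨d, hd⟩ := this
          exact ⟨d, (rea_hin k p q _ v _).mp hd⟩
        · intro h φ hφ
          simp only [List.mem_map] at hφ
          obtain ⟨c, _, rfl⟩ := hφ
          obtain ⟨d, hd⟩ := h c
          rw [rea_mex]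
          exact ⟨d, (rea_hin k p q _ v _).mpr hd⟩
      · rw [rea_all]
        constructor
        · intro h d
          have := h d
          rw [rea_disj] at this
          obtain ⟨φ, hφ, hr⟩ := this
          simp only [List.mem_map] at hφ
          obtain ⟨c, _, rfl⟩ := hφ
          exact ⟨c, (rea_hin k p q _ v _).mp hr⟩
        · intro h d
          obtain ⟨c, hc⟩ := h d
          rw [rea_disj]
          exact ⟨_, List.mem_map.mpr ⟨c, List.mem_finRange c, rfl⟩,
            (rea_hin k p q _ v _).mpr hc⟩

/-! #### Composition -/

def gv (p q : FinPerm) {lp lq : ℕ} (ap : Fin lp → Fin p.1) (aq : Fin lq → Fin q.1) :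
    (Fin lp ⊕ (Unit ⊕ Fin lq)) → Fin (p.1 + (1 + q.1))
  | .inl x => embL (ap x)
  | .inr (.inl _) => embM
  | .inr (.inr y) => embR (aq y)

lemma ent_gv {lp lq : ℕ} (p p' q q' : FinPerm)
    (ap : Fin lp → Fin p.1) (ap' : Fin lp → Fin p'.1)
    (aq : Fin lq → Fin q.1) (aq' : Fin lq → Fin q'.1)
    (hp : tab p.2 ap = tab p'.2 ap') (hq : tab q.2 aq = tab q'.2 aq')
    (u v : Fin lp ⊕ (Unit ⊕ Fin lq)) :
    ent (glue p q).2 (gv p q ap aq u) (gv p q ap aq v) =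
    ent (glue p' q').2 (gv p' q' ap' aq' u) (gv p' q' ap' aq' v) := by
  have keyP := tab_iffs hp
  have keyQ := tab_iffs hq
  rcases u with x | u1 | y <;> rcases v with w | v1 | z <;>
    simp only [gv, ent, Prod.ext_iff, decide_eq_decide] <;>
    refine ⟨?_, ?_, ?_⟩ <;>
    simp only [Fin.lt_def, Fin.ext_iff, embL_val, embM_val, embR_val,
      glue_lt, glue_eq, decide_eq_decide, glue_vL, glue_vM, glue_vR] <;>
    (try have := (keyP x w)) <;> (try have := (keyQ y z)) <;>
    (try have b1 := (ap x).is_lt) <;> (try have b2 := (ap w).is_lt) <;>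
    (try have b3 := (aq y).is_lt) <;> (try have b4 := (aq z).is_lt) <;>
    (try have b5 := (ap' x).is_lt) <;> (try have b6 := (ap' w).is_lt) <;>
    (try have b7 := (aq' y).is_lt) <;> (try have b8 := (aq' z).is_lt) <;>
    (try have c1 := (p.2 (ap x)).is_lt) <;> (try have c2 := (p.2 (ap w)).is_lt) <;>
    (try have c3 := (q.2 (aq y)).is_lt) <;> (try have c4 := (q.2 (aq z)).is_lt) <;>
    (try have c5 := (p'.2 (ap' x)).is_lt) <;> (try have c6 := (p'.2 (ap' w)).is_lt) <;>
    (try have c7 := (q'.2 (aq' y)).is_lt) <;> (try have c8 := (q'.2 (aq' z)).is_lt) <;>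
    first
      | omega
      | (obtain ⟨e1, e2, e3⟩ := this
         rw [Fin.lt_def, Fin.lt_def] at e1 e2
         rw [Fin.ext_iff] at e3
         constructor <;> intro hh <;> omega)

def liftL {lp lq : ℕ} : (Fin lp ⊕ (Unit ⊕ Fin lq)) → (Fin (lp+1) ⊕ (Unit ⊕ Fin lq)) :=
  Sum.map Fin.castSucc id

def liftR {lp lq : ℕ} : (Fin lp ⊕ (Unit ⊕ Fin lq)) → (Fin lp ⊕ (Unit ⊕ Fin (lq+1))) :=
  Sum.map id (Sum.map id Fin.castSucc)

lemma gv_liftL {lp lq : ℕ} (p q : FinPerm) (ap : Fin lp → Fin p.1) (aq : Fin lq → Fin q.1)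
    (u : Fin p.1) (x : Fin lp ⊕ (Unit ⊕ Fin lq)) :
    gv p q (Fin.snoc ap u) aq (liftL x) = gv p q ap aq x := by
  rcases x with x | u1 | y <;> simp [liftL, gv]

lemma gv_liftR {lp lq : ℕ} (p q : FinPerm) (ap : Fin lp → Fin p.1) (aq : Fin lq → Fin q.1)
    (v : Fin q.1) (x : Fin lp ⊕ (Unit ⊕ Fin lq)) :
    gv p q ap (Fin.snoc aq v) (liftR x) = gv p q ap aq x := by
  rcases x with x | u1 | y <;> simp [liftR, gv]

lemma comp : ∀ (k : ℕ) {l lp lq : ℕ} (p p' q q' : FinPerm)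
    (s : Fin l → (Fin lp ⊕ (Unit ⊕ Fin lq)))
    (ap : Fin lp → Fin p.1) (ap' : Fin lp → Fin p'.1)
    (aq : Fin lq → Fin q.1) (aq' : Fin lq → Fin q'.1),
    inv k p ap = inv k p' ap' → inv k q aq = inv k q' aq' →
    inv k (glue p q) (fun i => gv p q ap aq (s i)) =
      inv k (glue p' q') (fun i => gv p' q' ap' aq' (s i))
  | 0, l, lp, lq, p, p', q, q', s, ap, ap', aq, aq', hp, hq => by
      show tab _ _ = tab _ _
      funext i j
      exact ent_gv p p' q q' ap ap' aq aq' hp hq (s i) (s j)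
  | (k+1), l, lp, lq, p, p', q, q', s, ap, ap', aq, aq', hp, hq => by
      apply inv_eq_iff.mpr
      refine ⟨?_, ?_, ?_⟩
      · funext i j
        exact ent_gv p p' q q' ap ap' aq aq' (inv_tab hp) (inv_tab hq) (s i) (s j)
      · intro c
        rcases cases3 c with ⟨u, rfl⟩ | rfl | ⟨y, rfl⟩
        · obtain ⟨u', hu⟩ := inv_succ_ext hp u
          refine ⟨embL u', ?_⟩
          have h1 : Fin.snoc (fun i => gv p q ap aq (s i)) (embL u) =
              fun i => gv p q (Fin.snoc ap u) aq
                ((Fin.snoc (fun i => liftL (s i)) (Sum.inl (Fin.last lp)) :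
                  Fin (l+1) → _) i) := by
            funext i
            refine Fin.lastCases ?_ (fun i => ?_) i
            · simp [gv]
            · simp [Fin.snoc_castSucc, gv_liftL]
          have h2 : Fin.snoc (fun i => gv p' q' ap' aq' (s i)) (embL u') =
              fun i => gv p' q' (Fin.snoc ap' u') aq'
                ((Fin.snoc (fun i => liftL (s i)) (Sum.inl (Fin.last lp)) :
                  Fin (l+1) → _) i) := by
            funext i
            refine Fin.lastCases ?_ (fun i => ?_) i
            · simp [gv]
            · simp [Fin.snoc_castSucc, gv_liftL]
          erw [h1, h2]
          exact comp k p p' q q' _ _ _ _ _ hu (inv_mono k hq)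
        · refine ⟨embM, ?_⟩
          have h1 : Fin.snoc (fun i => gv p q ap aq (s i)) (embM) =
              fun i => gv p q ap aq
                ((Fin.snoc s (Sum.inr (Sum.inl ())) : Fin (l+1) → _) i) := by
            funext i
            refine Fin.lastCases ?_ (fun i => ?_) i <;> simp [gv]
          have h2 : Fin.snoc (fun i => gv p' q' ap' aq' (s i)) (embM) =
              fun i => gv p' q' ap' aq'
                ((Fin.snoc s (Sum.inr (Sum.inl ())) : Fin (l+1) → _) i) := by
            funext i
            refine Fin.lastCases ?_ (fun i => ?_) i <;> simp [gv]
          erw [h1, h2]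
          exact comp k p p' q q' _ _ _ _ _ (inv_mono k hp) (inv_mono k hq)
        · obtain ⟨y', hy⟩ := inv_succ_ext hq y
          refine ⟨embR y', ?_⟩
          have h1 : Fin.snoc (fun i => gv p q ap aq (s i)) (embR y) =
              fun i => gv p q ap (Fin.snoc aq y)
                ((Fin.snoc (fun i => liftR (s i)) (Sum.inr (Sum.inr (Fin.last lq))) :
                  Fin (l+1) → _) i) := by
            funext i
            refine Fin.lastCases ?_ (fun i => ?_) i
            · simp [gv]
            · simp [Fin.snoc_castSucc, gv_liftR]
          have h2 : Fin.snoc (fun i => gv p' q' ap' aq' (s i)) (embR y') =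
              fun i => gv p' q' ap' (Fin.snoc aq' y')
                ((Fin.snoc (fun i => liftR (s i)) (Sum.inr (Sum.inr (Fin.last lq))) :
                  Fin (l+1) → _) i) := by
            funext i
            refine Fin.lastCases ?_ (fun i => ?_) i
            · simp [gv]
            · simp [Fin.snoc_castSucc, gv_liftR]
          erw [h1, h2]
          exact comp k p p' q q' _ _ _ _ _ (inv_mono k hp) hy
      · intro d
        rcases cases3 d with ⟨u', rfl⟩ | rfl | ⟨y', rfl⟩
        · obtain ⟨u, hu⟩ := inv_succ_ext' hp u'
          refine ⟨embL u, ?_⟩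
          have h1 : Fin.snoc (fun i => gv p q ap aq (s i)) (embL u) =
              fun i => gv p q (Fin.snoc ap u) aq
                ((Fin.snoc (fun i => liftL (s i)) (Sum.inl (Fin.last lp)) :
                  Fin (l+1) → _) i) := by
            funext i
            refine Fin.lastCases ?_ (fun i => ?_) i
            · simp [gv]
            · simp [Fin.snoc_castSucc, gv_liftL]
          have h2 : Fin.snoc (fun i => gv p' q' ap' aq' (s i)) (embL u') =
              fun i => gv p' q' (Fin.snoc ap' u') aq'
                ((Fin.snoc (fun i => liftL (s i)) (Sum.inl (Fin.last lp)) :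
                  Fin (l+1) → _) i) := by
            funext i
            refine Fin.lastCases ?_ (fun i => ?_) i
            · simp [gv]
            · simp [Fin.snoc_castSucc, gv_liftL]
          erw [h1, h2]
          exact comp k p p' q q' _ _ _ _ _ hu (inv_mono k hq)
        · refine ⟨embM, ?_⟩
          have h1 : Fin.snoc (fun i => gv p q ap aq (s i)) (embM) =
              fun i => gv p q ap aq
                ((Fin.snoc s (Sum.inr (Sum.inl ())) : Fin (l+1) → _) i) := by
            funext i
            refine Fin.lastCases ?_ (fun i => ?_) i <;> simp [gv]
          have h2 : Fin.snoc (fun i => gv p' q' ap' aq' (s i)) (embM) =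
              fun i => gv p' q' ap' aq'
                ((Fin.snoc s (Sum.inr (Sum.inl ())) : Fin (l+1) → _) i) := by
            funext i
            refine Fin.lastCases ?_ (fun i => ?_) i <;> simp [gv]
          erw [h1, h2]
          exact comp k p p' q q' _ _ _ _ _ (inv_mono k hp) (inv_mono k hq)
        · obtain ⟨y, hy⟩ := inv_succ_ext' hq y'
          refine ⟨embR y, ?_⟩
          have h1 : Fin.snoc (fun i => gv p q ap aq (s i)) (embR y) =
              fun i => gv p q ap (Fin.snoc aq y)
                ((Fin.snoc (fun i => liftR (s i)) (Sum.inr (Sum.inr (Fin.last lq))) :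
                  Fin (l+1) → _) i) := by
            funext i
            refine Fin.lastCases ?_ (fun i => ?_) i
            · simp [gv]
            · simp [Fin.snoc_castSucc, gv_liftR]
          have h2 : Fin.snoc (fun i => gv p' q' ap' aq' (s i)) (embR y') =
              fun i => gv p' q' ap' (Fin.snoc aq' y')
                ((Fin.snoc (fun i => liftR (s i)) (Sum.inr (Sum.inr (Fin.last lq))) :
                  Fin (l+1) → _) i) := by
            funext i
            refine Fin.lastCases ?_ (fun i => ?_) i
            · simp [gv]
            · simp [Fin.snoc_castSucc, gv_liftR]
          erw [h1, h2]
          exact comp k p p' q q' _ _ _ _ _ (inv_mono k hp) hy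


/-! #### Bridges to logical types -/

lemma sat_iff_rea {n : ℕ} (σ : Equiv.Perm (Fin n)) (ψ : L.Sentence) :
    Sat σ ψ ↔ Rea σ ψ (fun e => e.elim) (fun i => i.elim0) := by
  unfold Sat Rea
  letI := pStruct σ
  show ψ.Realize (Fin n) ↔ _
  unfold Language.Sentence.Realize Language.Formula.Realize
  constructor <;> intro h <;> (convert h using 2 <;> exact Subsingleton.elim _ _)

lemma kEquiv_iff_inv (k : ℕ) (p q : FinPerm) :
    kEquiv k p q ↔
      inv k p (fun i : Fin 0 => i.elim0) = inv k q (fun i : Fin 0 => i.elim0) := by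
  constructor
  · intro h
    have hqd : qd ((hin k p (fun i : Fin 0 => i.elim0)) : L.Sentence) ≤ k := qd_hin k p _
    have hp : Sat p.2 ((hin k p (fun i : Fin 0 => i.elim0)) : L.Sentence) := by
      rw [sat_iff_rea]
      exact (rea_hin k p p _ _ _).mpr rfl
    have hq := (h _ hqd).mp hp
    rw [sat_iff_rea] at hq
    exact (rea_hin k p q _ _ _).mp hq
  · intro h ψ hqd
    rw [sat_iff_rea, sat_iff_rea]
    exact adequacy ψ k p q _ _ _ _ hqd h

lemma kEquiv_glue {k : ℕ} {p p' q q' : FinPerm}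
    (hp : kEquiv k p p') (hq : kEquiv k q q') : kEquiv k (glue p q) (glue p' q') := by
  rw [kEquiv_iff_inv] at hp hq ⊢
  have := comp k p p' q q' (fun i : Fin 0 => i.elim0)
    (fun i : Fin 0 => i.elim0) (fun i : Fin 0 => i.elim0)
    (fun i : Fin 0 => i.elim0) (fun i : Fin 0 => i.elim0) hp hq
  have e1 : (fun i : Fin 0 => gv p q (fun i : Fin 0 => i.elim0) (fun i : Fin 0 => i.elim0)
      ((fun i : Fin 0 => i.elim0) i)) = (fun i : Fin 0 => i.elim0) := funext fun i => i.elim0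
  have e2 : (fun i : Fin 0 => gv p' q' (fun i : Fin 0 => i.elim0) (fun i : Fin 0 => i.elim0)
      ((fun i : Fin 0 => i.elim0) i)) = (fun i : Fin 0 => i.elim0) := funext fun i => i.elim0
  rw [e1, e2] at this
  exact this

lemma typeOf_eq_iff {k : ℕ} {p q : FinPerm} : typeOf k p = typeOf k q ↔ kEquiv k p q :=
  ⟨fun h => Quotient.exact h, fun h => Quotient.sound h⟩

lemma realized_Hfun {k : ℕ} {u₁ u₂ : QT k} (h1 : Realized k u₁) (h2 : Realized k u₂) :
    Realized k (Hfun k u₁ u₂) := by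
  obtain ⟨p, hpav, hpt⟩ := h1
  obtain ⟨q, hqav, hqt⟩ := h2
  refine ⟨glue p q, glue_avoids p q hpav hqav, ?_⟩
  have e1 : kEquiv k p (Quotient.out u₁) :=
    typeOf_eq_iff.mp (hpt.trans (Quotient.out_eq u₁).symm)
  have e2 : kEquiv k q (Quotient.out u₂) :=
    typeOf_eq_iff.mp (hqt.trans (Quotient.out_eq u₂).symm)
  exact typeOf_eq_iff.mpr (kEquiv_glue e1 e2)

lemma finite_Tk (k : ℕ) : Finite (Tk k) := by
  refine Finite.of_injective
    (fun t : Tk k => inv k (Quotient.out t.1) (fun i : Fin 0 => i.elim0)) ?_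
  intro t1 t2 h
  have h2 : kEquiv k (Quotient.out t1.1) (Quotient.out t2.1) := (kEquiv_iff_inv k _ _).mpr h
  have h3 : typeOf k (Quotient.out t1.1) = typeOf k (Quotient.out t2.1) := typeOf_eq_iff.mpr h2
  exact Subtype.ext ((Quotient.out_eq t1.1).symm.trans (h3.trans (Quotient.out_eq t2.1)))

lemma mem_of_reach {k : ℕ} {S : Set (Tk k)}
    (hcl : ∀ u ∈ S, ∀ v : Tk k, EdgeT k u v → v ∈ S) {x y : Tk k} (hx : x ∈ S)
    (h : Relation.ReflTransGen (EdgeT k) x y) : y ∈ S := by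
  induction h with
  | refl => exact hx
  | tail _ h2 ih => exact hcl _ ih _ h2

end Aux

/-- In the dependency graph `G_k`, any two vertices `u₁, u₂` have a common out-neighbour,
namely `H_k(u₁,u₂)`; consequently `G_k` has a unique terminal strongly connected component. -/
theorem dependency_graph_unique_terminal_scc (k : ℕ) (hk : 2 ≤ k) :
    (∀ u₁ u₂ : QT k, Realized k u₁ → Realized k u₂ →
      Realized k (Hfun k u₁ u₂) ∧ Edge k u₁ (Hfun k u₁ u₂) ∧ Edge k u₂ (Hfun k u₁ u₂)) ∧
    (∃! S : Set (Tk k), IsTermSCC k S) := by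
  classical
  have partA : ∀ u₁ u₂ : QT k, Realized k u₁ → Realized k u₂ →
      Realized k (Hfun k u₁ u₂) ∧ Edge k u₁ (Hfun k u₁ u₂) ∧ Edge k u₂ (Hfun k u₁ u₂) := by
    intro u₁ u₂ h1 h2
    exact ⟨realized_Hfun h1 h2, ⟨u₂, h2, Or.inl rfl⟩, ⟨u₁, h1, Or.inr rfl⟩⟩
  refine ⟨partA, ?_⟩
  haveI : Finite (Tk k) := finite_Tk k
  haveI : Fintype (Tk k) := Fintype.ofFinite _
  have hne : Nonempty (Tk k) := by
    refine ⟨⟨emptyType k, ⟨⟨0, 1⟩, ?_, rfl⟩⟩⟩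
    rintro ⟨i, -⟩
    exact i.elim0
  have dir : ∀ u v : Tk k, ∃ t : Tk k, EdgeT k u t ∧ EdgeT k v t := by
    intro u v
    exact ⟨⟨Hfun k u.1 v.1, (partA u.1 v.1 u.2 v.2).1⟩,
      ⟨v.1, v.2, Or.inl rfl⟩, ⟨u.1, u.2, Or.inr rfl⟩⟩
  obtain ⟨t0⟩ := hne
  have glob : ∃ t : Tk k, ∀ u : Tk k, Relation.ReflTransGen (EdgeT k) u t := by
    have key : ∀ s : Finset (Tk k), ∃ t, ∀ u ∈ s, Relation.ReflTransGen (EdgeT k) u t := by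
      intro s
      induction s using Finset.induction_on with
      | empty => exact ⟨t0, by simp⟩
      | @insert a s ha ih =>
        obtain ⟨t, ht⟩ := ih
        obtain ⟨t', h1, h2⟩ := dir a t
        refine ⟨t', fun u hu => ?_⟩
        rcases Finset.mem_insert.mp hu with rfl | hu
        · exact Relation.ReflTransGen.single h1
        · exact (ht u hu).tail h2
    obtain ⟨t, ht⟩ := key Finset.univ
    exact ⟨t, fun u => ht u (Finset.mem_univ u)⟩
  obtain ⟨ts, hts⟩ := glob
  set S : Set (Tk k) := {u | Relation.ReflTransGen (EdgeT k) ts u} with hSdef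
  have hts_mem : ts ∈ S := Relation.ReflTransGen.refl
  have hclS : ∀ u ∈ S, ∀ v : Tk k, EdgeT k u v → v ∈ S := by
    intro u hu v hv
    exact hu.tail hv
  have hmutS : ∀ u ∈ S, ∀ v ∈ S, Relation.ReflTransGen (EdgeT k) u v := by
    intro u _ v hv
    exact (hts u).trans hv
  have hS : IsTermSCC k S := ⟨⟨ts, hts_mem⟩, hmutS, hclS⟩
  refine ⟨S, hS, ?_⟩
  rintro S' ⟨⟨s', hs'⟩, hmut', hcl'⟩
  obtain ⟨t, e1, e2⟩ := dir ts s'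
  have htS : t ∈ S := Relation.ReflTransGen.single e1
  have htS' : t ∈ S' := hcl' s' hs' t e2
  ext u
  constructor
  · intro hu
    exact mem_of_reach hclS htS (hmut' t htS' u hu)
  · intro hu
    exact mem_of_reach hcl' htS' (hmutS t htS u hu)

end Av231
end

section
/- (Kakeya) Let (p_i)_{i ≥ 0} be a non-increasing sequence of positive real numbers with Σ_{i≥0} p_i < +∞. Assume that for all i ≥ 0 one has p_i ≤ Σ_{j > i} p_j. Then the set of subsums { Σ_{i≥0} ε_i p_i : (ε_i) ∈ {0,1}^ℕ } equals the full interval [0, Σ_{i≥0} p_i]. -/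
/-- The tail sum over the subtype `{j // i < j}` equals the shifted tsum. -/
lemma tail_tsum_eq (p : ℕ → ℝ) (n : ℕ) :
    (∑' j : {j : ℕ // n < j}, p j.1) = ∑' k : ℕ, p (k + (n + 1)) := by
  let e : ℕ ≃ {j : ℕ // n < j} :=
    { toFun := fun k => ⟨k + (n + 1), by omega⟩
      invFun := fun j => j.1 - (n + 1)
      left_inv := fun k => by simp
      right_inv := fun j => by
        ext; have := j.2; simp; omega }
  rw [← e.tsum_eq (fun j : {j : ℕ // n < j} => p j.1)]
  exact tsum_congr fun k => rfl

/-- Kakeya's lemma: if `(p_i)` is a non-increasing sequence of positive reals with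
`Σ p_i < ∞` and `p_i ≤ Σ_{j>i} p_j` for all `i`, then the set of subsums of `Σ p_i`
is the whole interval `[0, Σ p_i]`. -/
theorem kakeya_subsums (p : ℕ → ℝ) (hpos : ∀ i, 0 < p i) (hanti : Antitone p)
    (hsum : Summable p) (hcond : ∀ i : ℕ, p i ≤ ∑' j : {j : ℕ // i < j}, p j.1) :
    {x : ℝ | ∃ ε : ℕ → Bool, x = ∑' i : ℕ, if ε i then p i else 0} =
      Set.Icc 0 (∑' i : ℕ, p i) := by
  ext x
  constructor
  · rintro ⟨ε, rfl⟩
    have hle : ∀ i, (if ε i then p i else 0) ≤ p i := by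
      intro i; split <;> [exact le_rfl; exact (hpos i).le]
    have hnn : ∀ i, 0 ≤ (if ε i then p i else 0) := by
      intro i; split <;> [exact (hpos i).le; exact le_rfl]
    have hsf : Summable (fun i => if ε i then p i else 0) :=
      Summable.of_nonneg_of_le hnn hle hsum
    exact ⟨tsum_nonneg hnn, Summable.tsum_le_tsum hle hsf hsum⟩
  · rintro ⟨hx0, hxS⟩
    -- greedy remainder
    set r : ℕ → ℝ := fun n => Nat.rec x (fun n rn => if p n ≤ rn then rn - p n else rn) n
      with hr
    have hr0 : r 0 = x := rfl
    have hrs : ∀ n, r (n + 1) = if p n ≤ r n then r n - p n else r n := fun n => rfl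
    have htail : ∀ n, Summable (fun j => p (j + n)) := fun n =>
      (summable_nat_add_iff n).mpr hsum
    -- invariant: 0 ≤ r n ≤ tail sum from n
    have hinv : ∀ n, 0 ≤ r n ∧ r n ≤ ∑' j : ℕ, p (j + n) := by
      intro n
      induction n with
      | zero => exact ⟨hx0, by simpa [hr0] using hxS⟩
      | succ n ih =>
        rw [hrs]
        by_cases h : p n ≤ r n
        · rw [if_pos h]
          constructor
          · linarith
          · have hsplit : (∑' j : ℕ, p (j + n)) = p n + ∑' j : ℕ, p (j + (n + 1)) := by
              rw [Summable.tsum_eq_zero_add (htail n)]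
              congr 1
              · simp
              · exact tsum_congr fun j => congrArg p (by omega)
            have := ih.2
            rw [hsplit] at this
            linarith
        · rw [if_neg h]
          refine ⟨ih.1, ?_⟩
          have h1 : r n ≤ p n := le_of_lt (lt_of_not_ge h)
          have h2 := hcond n
          rw [tail_tsum_eq] at h2
          linarith
    -- the greedy choice
    set ε : ℕ → Bool := fun n => decide (p n ≤ r n) with hε
    set f : ℕ → ℝ := fun i => if ε i then p i else 0 with hf
    have hfval : ∀ n, f n = if p n ≤ r n then p n else 0 := by
      intro n; simp [hf, hε]
    have hpart : ∀ n, ∑ i ∈ Finset.range n, f i = x - r n := by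
      intro n
      induction n with
      | zero => simp [hr0]
      | succ n ih =>
        rw [Finset.sum_range_succ, ih, hfval, hrs]
        by_cases h : p n ≤ r n
        · rw [if_pos h, if_pos h]; ring
        · rw [if_neg h, if_neg h]; ring
    -- r n → 0
    have htail0 : Filter.Tendsto (fun n => ∑' j : ℕ, p (j + n)) Filter.atTop (nhds 0) :=
      tendsto_sum_nat_add p
    have hrlim : Filter.Tendsto r Filter.atTop (nhds 0) := by
      refine squeeze_zero (fun n => (hinv n).1) (fun n => (hinv n).2) htail0
    -- partial sums of f tend to x
    have hplim : Filter.Tendsto (fun n => ∑ i ∈ Finset.range n, f i)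
        Filter.atTop (nhds x) := by
      simp only [hpart]
      simpa using Filter.Tendsto.const_sub x hrlim
    have hsf : Summable f := by
      refine Summable.of_nonneg_of_le (fun i => ?_) (fun i => ?_) hsum
      · rw [hfval]; split <;> [exact (hpos i).le; exact le_rfl]
      · rw [hfval]; split <;> [exact le_rfl; exact (hpos i).le]
    have := hsf.hasSum.tendsto_sum_nat
    have hx : ∑' i, f i = x := tendsto_nhds_unique this hplim
    exact ⟨ε, hx.symm⟩
end

section
/- Let L' = { Σ_{k=0}^{K} a_k · 4^{-k-1} : K ≥ 0 and a_k integers with 0 ≤ a_k ≤ 2·Cat_k }, where Cat_k is the k-th Catalan number. Then the topological closure of L' in ℝ equals the interval [0,1]. In particular, Σ_{k=0}^{∞} 2·Cat_k·4^{-k-1} = 1. -/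
open Finset Filter

noncomputable def cbq (n : ℕ) : ℝ := (Nat.centralBinom n : ℝ) / 4 ^ n

lemma pow4 (k : ℕ) : (4 : ℝ) ^ (-(k : ℤ) - 1) = 1 / 4 ^ (k + 1) := by
  rw [show (-(k:ℤ) - 1) = -((k+1 : ℕ) : ℤ) by push_cast; ring, zpow_neg, zpow_natCast, one_div]

lemma cbq_zero : cbq 0 = 1 := by simp [cbq, Nat.centralBinom_zero]

lemma cbq_nonneg (n : ℕ) : 0 ≤ cbq n := by unfold cbq; positivity

lemma cbq_ge (n : ℕ) : 1 / (4:ℝ) ^ n ≤ cbq n := by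
  unfold cbq
  gcongr
  exact_mod_cast Nat.centralBinom_pos n

lemma cb_key (n : ℕ) : (Nat.centralBinom (n+1) : ℝ) = 4 * Nat.centralBinom n - 2 * catalan n := by
  have h1 : ((n : ℝ) + 1) * (Nat.centralBinom (n+1) : ℝ)
      = 2 * (2 * n + 1) * Nat.centralBinom n := by
    exact_mod_cast Nat.succ_mul_centralBinom_succ n
  have h2 : ((n : ℝ) + 1) * (catalan n : ℝ) = Nat.centralBinom n := by
    exact_mod_cast succ_mul_catalan_eq_centralBinom n
  have hn : ((n:ℝ) + 1) ≠ 0 := by positivity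
  apply mul_left_cancel₀ hn
  linear_combination h1 + 2 * h2

lemma cbq_step (n : ℕ) : cbq n - cbq (n + 1) = 2 * (catalan n : ℝ) / 4 ^ (n + 1) := by
  have h4 : (4:ℝ) ^ n ≠ 0 := by positivity
  simp only [cbq, pow_succ, cb_key]
  field_simp
  ring

lemma cbq_antitone : ∀ m n : ℕ, m ≤ n → cbq n ≤ cbq m := by
  intro m n h
  induction n with
  | zero => simp_all
  | succ n ih =>
    rcases Nat.lt_or_ge m (n+1) with h' | h'
    · have := ih (Nat.lt_succ_iff.mp h')
      have hs := cbq_step n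
      have : 2 * (catalan n : ℝ) / 4 ^ (n+1) ≥ 0 := by positivity
      linarith
    · have : m = n + 1 := le_antisymm h h'
      simp [this]

lemma cbq_sq (n : ℕ) : (cbq n) ^ 2 * (n + 1) ≤ 1 := by
  induction n with
  | zero => simp [cbq_zero]
  | succ n ih =>
    have h1 : ((n : ℝ) + 1) * (Nat.centralBinom (n+1) : ℝ)
        = 2 * (2 * n + 1) * Nat.centralBinom n := by
      exact_mod_cast Nat.succ_mul_centralBinom_succ n
    have hn : (0:ℝ) < (n:ℝ) + 1 := by positivity
    have hrec : cbq (n+1) = cbq n * (2 * n + 1) / (2 * n + 2) := by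
      have h4 : (4:ℝ) ^ n ≠ 0 := by positivity
      simp only [cbq, pow_succ]
      field_simp
      linear_combination 2 * h1
    rw [hrec]
    have h0 : 0 ≤ cbq n := cbq_nonneg n
    have key : ((2*(n:ℝ)+1)/(2*n+2))^2 * ((n:ℝ)+2) ≤ ((n:ℝ)+1) := by
      rw [div_pow, div_mul_eq_mul_div, div_le_iff₀ (by positivity)]
      nlinarith [sq_nonneg ((n:ℝ))]
    calc (cbq n * (2 * n + 1) / (2 * n + 2)) ^ 2 * (↑(n+1) + 1)
        = (cbq n)^2 * (((2*(n:ℝ)+1)/(2*n+2))^2 * ((n:ℝ)+2)) := by push_cast; ring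
      _ ≤ (cbq n)^2 * ((n:ℝ)+1) := by nlinarith [sq_nonneg (cbq n)]
      _ ≤ 1 := by exact_mod_cast ih

lemma cbq_tendsto : Tendsto cbq atTop (nhds 0) := by
  have hb : ∀ n : ℕ, cbq n ≤ Real.sqrt (1 / ((n:ℝ)+1)) := by
    intro n
    rw [← Real.sqrt_sq (cbq_nonneg n)]
    apply Real.sqrt_le_sqrt
    rw [le_div_iff₀ (by positivity)]
    exact cbq_sq n
  have h1 : Tendsto (fun n : ℕ => 1/((n:ℝ)+1)) atTop (nhds 0) :=
    tendsto_one_div_add_atTop_nhds_zero_nat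
  have h2 : Tendsto (fun n : ℕ => Real.sqrt (1/((n:ℝ)+1))) atTop (nhds 0) := by
    have := (Real.continuous_sqrt.tendsto' 0 0 (by simp)).comp h1
    exact this
  exact squeeze_zero cbq_nonneg hb h2

lemma sum_eq (n : ℕ) :
    ∑ k ∈ Finset.range n, 2 * (catalan k : ℝ) * (4 : ℝ) ^ (-(k : ℤ) - 1) = 1 - cbq n := by
  have : ∀ k, 2 * (catalan k : ℝ) * (4 : ℝ) ^ (-(k : ℤ) - 1) = cbq k - cbq (k+1) := by
    intro k
    rw [pow4, cbq_step]
    ring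
  rw [Finset.sum_congr rfl (fun k _ => this k), Finset.sum_range_sub' cbq, cbq_zero]

lemma greedy (y : ℝ) (hy0 : 0 ≤ y) (hy1 : y ≤ 1) (n : ℕ) :
    ∃ a : ℕ → ℕ, (∀ k, a k ≤ 2 * catalan k) ∧
      0 ≤ y - ∑ k ∈ Finset.range n, (a k : ℝ) * (4 : ℝ) ^ (-(k : ℤ) - 1) ∧
      y - ∑ k ∈ Finset.range n, (a k : ℝ) * (4 : ℝ) ^ (-(k : ℤ) - 1) ≤ cbq n := by
  induction n with
  | zero =>
    refine ⟨fun _ => 0, fun k => Nat.zero_le _, by simpa using hy0, by simpa [cbq_zero] using hy1⟩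
  | succ n ih =>
    obtain ⟨a, ha, h0, h1⟩ := ih
    set s := ∑ k ∈ Finset.range n, (a k : ℝ) * (4 : ℝ) ^ (-(k : ℤ) - 1) with hs
    set r := y - s with hr
    have hw : (4:ℝ) ^ (-(n:ℤ) - 1) = 1 / 4 ^ (n+1) := pow4 n
    have hwpos : (0:ℝ) < 1 / (4:ℝ) ^ (n+1) := by positivity
    by_cases hcase : 2 * (catalan n : ℝ) * (1 / 4 ^ (n+1)) ≤ r
    · refine ⟨Function.update a n (2 * catalan n), ?_, ?_, ?_⟩
      · intro k
        rcases eq_or_ne k n with rfl | hk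
        · simp [Function.update_self]
        · simp only [Function.update_of_ne hk]; exact ha k
      all_goals
      · rw [Finset.sum_range_succ,
          Finset.sum_congr rfl (fun k hk => by
            rw [Function.update_of_ne (Finset.mem_range.mp hk).ne]),
          ← hs, Function.update_self, hw]
        have hstep := cbq_step n
        push_cast
        first
        | linarith [hcase]
        | · have : cbq n - cbq (n+1) = 2 * (catalan n : ℝ) * (1/4^(n+1)) := by
              rw [hstep]; ring
            linarith [this, h1]
    · push_neg at hcase
      set m : ℕ := ⌊r * 4 ^ (n+1)⌋₊ with hm
      have hr0 : 0 ≤ r := h0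
      have hrm : (m : ℝ) ≤ r * 4 ^ (n+1) := Nat.floor_le (by positivity)
      have hrm2 : r * 4 ^ (n+1) < m + 1 := Nat.lt_floor_add_one _
      have hmle : m ≤ 2 * catalan n := by
        have : r * 4 ^ (n+1) < 2 * catalan n := by
          have h4 : (0:ℝ) < 4 ^ (n+1) := by positivity
          calc r * 4 ^ (n+1) < (2 * (catalan n : ℝ) * (1/4^(n+1))) * 4 ^ (n+1) := by
                exact mul_lt_mul_of_pos_right hcase h4
            _ = 2 * catalan n := by field_simp
        have := Nat.floor_lt (by positivity : (0:ℝ) ≤ r * 4 ^ (n+1)) |>.mpr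
          (by exact_mod_cast this)
        omega
      refine ⟨Function.update a n m, ?_, ?_, ?_⟩
      · intro k
        rcases eq_or_ne k n with rfl | hk
        · simpa [Function.update_self] using hmle
        · simp only [Function.update_of_ne hk]; exact ha k
      all_goals
        rw [Finset.sum_range_succ,
          Finset.sum_congr rfl (fun k hk => by
            rw [Function.update_of_ne (Finset.mem_range.mp hk).ne]),
          ← hs, Function.update_self, hw]
      · have h4 : (0:ℝ) < 4 ^ (n+1) := by positivity
        have : (m:ℝ) * (1/4^(n+1)) ≤ r := by
          rw [mul_one_div, div_le_iff₀ h4]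
          linarith
        linarith
      · have h4 : (0:ℝ) < 4 ^ (n+1) := by positivity
        have h5 : r ≤ ((m:ℝ) + 1) / 4^(n+1) := by
          rw [le_div_iff₀ h4]; linarith
        have h6 : (1:ℝ)/4^(n+1) ≤ cbq (n+1) := cbq_ge (n+1)
        have h7 : ((m:ℝ) + 1) / 4^(n+1) = (m:ℝ) * (1/4^(n+1)) + 1/4^(n+1) := by ring
        linarith


/-- The set `L' = { Σ_{k=0}^K a_k 4^{-k-1} : K ≥ 0, 0 ≤ a_k ≤ 2·Cat_k }` of finite subsums
has closure the full interval `[0,1]`; in particular `Σ_{k≥0} 2·Cat_k·4^{-k-1} = 1`. -/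
theorem closure_of_finite_subsums_eq_Icc :
    closure {x : ℝ | ∃ K : ℕ, ∃ a : ℕ → ℕ, (∀ k, k ≤ K → a k ≤ 2 * catalan k) ∧
        x = ∑ k ∈ Finset.range (K + 1), (a k : ℝ) * (4 : ℝ) ^ (-(k : ℤ) - 1)} =
      Set.Icc (0 : ℝ) 1 ∧
    HasSum (fun k : ℕ => 2 * (catalan k : ℝ) * (4 : ℝ) ^ (-(k : ℤ) - 1)) 1 := by
  constructor
  · apply subset_antisymm
    · apply closure_minimal ?_ isClosed_Icc
      rintro x ⟨K, a, ha, rfl⟩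
      constructor
      · apply Finset.sum_nonneg; intro k _; positivity
      · calc ∑ k ∈ Finset.range (K+1), (a k : ℝ) * (4:ℝ)^(-(k:ℤ)-1)
            ≤ ∑ k ∈ Finset.range (K+1), 2*(catalan k : ℝ)*(4:ℝ)^(-(k:ℤ)-1) := by
              apply Finset.sum_le_sum; intro k hk
              have h := ha k (Nat.lt_succ_iff.mp (Finset.mem_range.mp hk))
              have hw : (0:ℝ) ≤ (4:ℝ)^(-(k:ℤ)-1) := by positivity
              apply mul_le_mul_of_nonneg_right ?_ hw
              exact_mod_cast h
          _ = 1 - cbq (K+1) := sum_eq (K+1)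
          _ ≤ 1 := by linarith [cbq_nonneg (K+1)]
    · intro y hy
      rw [Metric.mem_closure_iff]
      intro ε hε
      obtain ⟨n, hn⟩ := (cbq_tendsto.eventually (gt_mem_nhds hε)).exists
      obtain ⟨a, ha, h0, h1⟩ := greedy y hy.1 hy.2 (n+1)
      refine ⟨_, ⟨n, a, fun k _ => ha k, rfl⟩, ?_⟩
      have h2 : y - ∑ k ∈ Finset.range (n+1), (a k : ℝ) * (4:ℝ)^(-(k:ℤ)-1) ≤ cbq n :=
        le_trans h1 (cbq_antitone n (n+1) (Nat.le_succ n))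
      rw [Real.dist_eq, abs_of_nonneg h0]
      linarith
  · rw [hasSum_iff_tendsto_nat_of_nonneg (fun i => by positivity)]
    simp only [sum_eq]
    simpa using tendsto_const_nhds.sub cbq_tendsto
end
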